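/- arXiv:1608.03580 — 5 statements merged into one kernel-verified Lean document; each statement's English description precedes it below -/
import Mathlib

section
/- For any x, y ∈ R^d contained in a set C with ||x||₂, ||y||₂ ≤ D, and π(x) = (x, R), π(y) = (y, R) ∈ R^{d+1}: the radially-projected points satisfy || (R/||π(x)||₂)π(x) - (R/||π(y)||₂)π(y) ||₂ ≤ D²/R + ||x - y||₂. -/
theorem stmt8 (d : ℕ) (R D : ℝ) (hR : 0 < R)
    (x y : EuclideanSpace ℝ (Fin d)) (hx : ‖x‖ ≤ D) (hy : ‖y‖ ≤ D)
    (px py : EuclideanSpace ℝ (Fin (d + 1)))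
    (hpx : ∀ i : Fin (d + 1), px i = if h : (i : ℕ) < d then x ⟨i, h⟩ else R)
    (hpy : ∀ i : Fin (d + 1), py i = if h : (i : ℕ) < d then y ⟨i, h⟩ else R) :
    ‖(R / ‖px‖) • px - (R / ‖py‖) • py‖ ≤ D ^ 2 / R + ‖x - y‖ := by
  have hD : 0 ≤ D := le_trans (norm_nonneg x) hx
  have hD2R : 0 ≤ D ^ 2 / R := div_nonneg (sq_nonneg D) hR.le
  -- the last coordinate
  set L : Fin (d + 1) := ⟨d, Nat.lt_succ_self d⟩ with hL
  have hpxL : px L = R := by rw [hpx]; simp [hL]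
  have hpyL : py L = R := by rw [hpy]; simp [hL]
  -- R ≤ norms
  have key : ∀ z : EuclideanSpace ℝ (Fin (d + 1)), z L = R → R ≤ ‖z‖ := by
    intro z hz
    have h1 : R ^ 2 ≤ ∑ i, ‖z i‖ ^ 2 :=
      calc R ^ 2 = ‖z L‖ ^ 2 := by rw [hz, Real.norm_eq_abs, sq_abs]
        _ ≤ _ := Finset.single_le_sum (f := fun i => ‖z i‖ ^ 2)
            (fun i _ => sq_nonneg _) (Finset.mem_univ L)
    rw [EuclideanSpace.norm_eq]
    have := Real.sqrt_le_sqrt h1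
    rwa [Real.sqrt_sq hR.le] at this
  have hA : R ≤ ‖px‖ := key px hpxL
  have hB : R ≤ ‖py‖ := key py hpyL
  have hA0 : 0 < ‖px‖ := lt_of_lt_of_le hR hA
  have hB0 : 0 < ‖py‖ := lt_of_lt_of_le hR hB
  -- ‖px - py‖ = ‖x - y‖
  have hdiff : ‖px - py‖ = ‖x - y‖ := by
    rw [EuclideanSpace.norm_eq, EuclideanSpace.norm_eq]
    congr 1
    rw [Fin.sum_univ_castSucc]
    have hlast : ‖(px - py) (Fin.last d)‖ ^ 2 = 0 := by
      have h0 : (px - py) (Fin.last d) = 0 := by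
        show px L - py L = 0
        rw [hpxL, hpyL]; ring
      rw [h0]; simp
    rw [hlast, add_zero]
    apply Finset.sum_congr rfl
    intro i _
    have h1 : ((i.castSucc : Fin (d+1)) : ℕ) < d := i.isLt
    have : (px - py) i.castSucc = x i - y i := by
      simp only [PiLp.sub_apply, hpx, hpy, dif_pos h1]
      congr 1
    rw [this]
    simp
  -- squared norm bound
  have hs := real_inner_le_norm px py
  have hexp : ‖(R / ‖px‖) • px - (R / ‖py‖) • py‖ ^ 2
      = 2 * R ^ 2 - 2 * (R / ‖px‖) * (R / ‖py‖) * inner ℝ px py := by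
    rw [norm_sub_sq_real, real_inner_smul_left, real_inner_smul_right,
      norm_smul, norm_smul]
    rw [Real.norm_eq_abs, Real.norm_eq_abs,
      abs_of_nonneg (div_nonneg hR.le hA0.le), abs_of_nonneg (div_nonneg hR.le hB0.le)]
    field_simp
    ring
  have hexp2 : ‖px - py‖ ^ 2 = ‖px‖ ^ 2 - 2 * inner ℝ px py + ‖py‖ ^ 2 :=
    norm_sub_sq_real px py
  have hsqle : ‖(R / ‖px‖) • px - (R / ‖py‖) • py‖ ^ 2 ≤ ‖px - py‖ ^ 2 := by
    rw [hexp, hexp2]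
    set A := ‖px‖
    set B := ‖py‖
    set s : ℝ := inner ℝ px py
    have hAB : 0 < A * B := mul_pos hA0 hB0
    rw [← mul_le_mul_iff_of_pos_right hAB]
    have e : (2 * R ^ 2 - 2 * (R / A) * (R / B) * s) * (A * B)
        = 2 * R ^ 2 * (A * B) - 2 * R ^ 2 * s := by
      have eA : R / A * A = R := div_mul_cancel₀ R hA0.ne'
      have eB : R / B * B = R := div_mul_cancel₀ R hB0.ne'
      linear_combination (-2 * s * (R / B * B)) * eA + (-2 * s * R) * eB
    rw [e]
    nlinarith [mul_nonneg (sub_nonneg.2 hs) (sub_nonneg.2 (mul_le_mul hA hB hR.le hA0.le) :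
        (0:ℝ) ≤ A * B - R * R), mul_nonneg hAB.le (sq_nonneg (A - B))]
  have hle : ‖(R / ‖px‖) • px - (R / ‖py‖) • py‖ ≤ ‖px - py‖ := by
    nlinarith [norm_nonneg ((R / ‖px‖) • px - (R / ‖py‖) • py), norm_nonneg (px - py)]
  calc ‖(R / ‖px‖) • px - (R / ‖py‖) • py‖ ≤ ‖px - py‖ := hle
    _ = ‖x - y‖ := hdiff
    _ ≤ D ^ 2 / R + ‖x - y‖ := by linarith
end

section
/- (Two-function hypercontractive inequality.) Let σ ∈ (0,1) and let p, q ∈ [1, ∞) satisfy (p-1)(q-1) = σ². Then for all functions f, g : {-1,1}^d → R, ⟨T_σ f, g⟩ ≤ ||f||_p · ||g||_q, where T_σ is the noise operator with correlation σ, the inner product is E_{x uniform}[T_σ f(x) · g(x)], and the norms are with respect to the uniform measure on {-1,1}^d. -/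
/-- Expectation over the uniform measure on `{-1,1}^d` (modeled as `Fin d → Bool`). -/
noncomputable def hExp (d : ℕ) (f : (Fin d → Bool) → ℝ) : ℝ :=
  (∑ x : Fin d → Bool, f x) / 2 ^ d

/-- Transition weight of the noise distribution `N_σ(x)`: each coordinate is kept
with probability `σ` and resampled uniformly otherwise. -/
noncomputable def noiseW (σ : ℝ) {d : ℕ} (y x : Fin d → Bool) : ℝ :=
  ∏ i, if y i = x i then (1 + σ) / 2 else (1 - σ) / 2

/-- The noise operator `T_σ f (x) = E_{y ∼ N_σ(x)} [f y]`. -/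
noncomputable def Tnoise (σ : ℝ) {d : ℕ} (f : (Fin d → Bool) → ℝ) :
    (Fin d → Bool) → ℝ :=
  fun x => ∑ y : Fin d → Bool, noiseW σ y x * f y

/-- `L^p` norm with respect to the uniform measure on `{-1,1}^d`. -/
noncomputable def hNorm (d : ℕ) (p : ℝ) (f : (Fin d → Bool) → ℝ) : ℝ :=
  hExp d (fun x => |f x| ^ p) ^ (1 / p)





open Real Set

noncomputable def Afn (r t : ℝ) : ℝ := ((1+t)^r + (1-t)^r)/2
noncomputable def dA (r t : ℝ) : ℝ := (r*(1+t)^(r-1) - r*(1-t)^(r-1))/2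
noncomputable def ddA (r t : ℝ) : ℝ := (r*(r-1)*(1+t)^(r-2) + r*(r-1)*(1-t)^(r-2))/2

lemma exp_mono {u w a b : ℝ} (hu : 1 ≤ u) (hw0 : 0 < w) (huw : u*w ≤ 1)
    (hab : a ≤ b) (hb : b ≤ 0) :
    u^b + w^b ≤ u^a + w^a := by
  have hu0 : (0:ℝ) < u := lt_of_lt_of_le one_pos hu
  set c := b - a with hc
  have hc0 : 0 ≤ c := by simp [hc]; linarith
  have hw1 : w ≤ 1 := by nlinarith
  -- step 1 : 2 ≤ u^(-c) + w^(-c)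
  have hXsq : (u^(-(c/2)))^2 = u^(-c) := by
    rw [← Real.rpow_natCast (u^(-(c/2))) 2, ← Real.rpow_mul hu0.le]
    norm_num
  have hYsq : (w^(-(c/2)))^2 = w^(-c) := by
    rw [← Real.rpow_natCast (w^(-(c/2))) 2, ← Real.rpow_mul hw0.le]
    norm_num
  have hXY : u^(-(c/2)) * w^(-(c/2)) = (u*w)^(-(c/2)) := (Real.mul_rpow hu0.le hw0.le).symm
  have huw0 : 0 < u*w := mul_pos hu0 hw0
  have hXY1 : 1 ≤ (u*w)^(-(c/2)) :=
    Real.one_le_rpow_of_pos_of_le_one_of_nonpos huw0 huw (by linarith)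
  have hstep1 : 2 ≤ u^(-c) + w^(-c) := by
    nlinarith [sq_nonneg (u^(-(c/2)) - w^(-(c/2)))]
  -- step 2
  have hua : u^a = u^b * u^(-c) := by
    rw [← Real.rpow_add hu0]; congr 1; simp [hc]
  have hwa : w^a = w^b * w^(-c) := by
    rw [← Real.rpow_add hw0]; congr 1; simp [hc]
  have hub1 : u^b ≤ 1 := Real.rpow_le_one_of_one_le_of_nonpos hu hb
  have hub0 : 0 ≤ u^b := Real.rpow_nonneg hu0.le b
  have hwb1 : 1 ≤ w^b := Real.one_le_rpow_of_pos_of_le_one_of_nonpos hw0 hw1 hb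
  have huc1 : u^(-c) ≤ 1 := Real.rpow_le_one_of_one_le_of_nonpos hu (by linarith)
  have hwc1 : 1 ≤ w^(-c) := Real.one_le_rpow_of_pos_of_le_one_of_nonpos hw0 hw1 (by linarith)
  rw [hua, hwa]
  nlinarith [mul_le_mul_of_nonneg_left (show 1 - u^(-c) ≤ w^(-c) - 1 by linarith)
    (show (0:ℝ) ≤ u^b from hub0),
    mul_le_mul_of_nonneg_right (show u^b ≤ w^b by linarith) (show (0:ℝ) ≤ w^(-c) - 1 by linarith)]

lemma S_mono {b : ℝ} (hb1 : b ≤ 0) {s' s : ℝ} (h0 : 0 ≤ s') (hss : s' ≤ s) (hs1 : s < 1) :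
    (1+s')^b + (1-s')^b ≤ (1+s)^b + (1-s)^b := by
  set h : ℝ → ℝ := fun x => (1+x)^b + (1-x)^b with hh
  have key : ∀ x ∈ Icc (0:ℝ) s,
      HasDerivAt h (b*(1+x)^(b-1) - b*(1-x)^(b-1)) x := by
    intro x hx
    have hx1 : (0:ℝ) < 1 + x := by have := hx.1; linarith
    have hx2 : (0:ℝ) < 1 - x := by have := hx.2; linarith
    have k1 : HasDerivAt (fun t : ℝ => 1 + t) 1 x := by
      simpa using (hasDerivAt_id x).const_add 1
    have k2 : HasDerivAt (fun t : ℝ => 1 - t) (-1) x := by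
      exact (hasDerivAt_id' x).const_sub 1
    have h3 := k1.rpow_const (p := b) (Or.inl hx1.ne')
    have h4 := k2.rpow_const (p := b) (Or.inl hx2.ne')
    have := h3.add h4
    refine this.congr_deriv ?_
    ring
  have hmono : MonotoneOn h (Icc 0 s) := by
    apply monotoneOn_of_deriv_nonneg (convex_Icc 0 s)
    · exact fun x hx => (key x hx).continuousAt.continuousWithinAt
    · intro x hx
      rw [interior_Icc] at hx
      exact (key x (Ioo_subset_Icc_self hx)).differentiableAt.differentiableWithinAt
    · intro x hx
      rw [interior_Icc] at hx
      rw [(key x (Ioo_subset_Icc_self hx)).deriv]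
      have hx1 : (0:ℝ) < 1 + x := by have := hx.1; linarith
      have hx2 : (0:ℝ) < 1 - x := by have := hx.2.trans_le (le_of_lt hs1); linarith
      have : (1+x)^(b-1) ≤ (1-x)^(b-1) :=
        Real.rpow_le_rpow_of_nonpos hx2 (by have := hx.1; linarith) (by linarith)
      have h5 := mul_nonneg (neg_nonneg.mpr hb1) (sub_nonneg.mpr this)
      nlinarith
  exact hmono (mem_Icc.mpr ⟨h0, hss⟩) (mem_Icc.mpr ⟨h0.trans hss, le_refl s⟩) hss

lemma Afn_neg (r x : ℝ) : Afn r (-x) = Afn r x := by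
  unfold Afn
  rw [show (1 + -x) = 1 - x by ring, show (1 - -x) = 1 + x by ring]
  ring

lemma Afn_zero {r : ℝ} : Afn r 0 = 1 := by
  unfold Afn
  norm_num

lemma Afn_two {s : ℝ} (h0 : 0 ≤ 1 + s) (h1 : 0 ≤ 1 - s) : Afn 2 s = 1 + s^2 := by
  unfold Afn
  rw [rpow_two, rpow_two]
  ring

lemma one_le_Afn {r t : ℝ} (hr : 1 ≤ r) (ht : -1 ≤ t) (ht1 : t ≤ 1) : 1 ≤ Afn r t := by
  have h1 : 1 + r * t ≤ (1+t)^r := one_add_mul_self_le_rpow_one_add ht hr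
  have h2 : 1 + r * (-t) ≤ (1+(-t))^r := one_add_mul_self_le_rpow_one_add (by linarith) hr
  rw [show (1 + -t) = 1 - t by ring] at h2
  unfold Afn
  linarith

lemma Afn_pos {r t : ℝ} (hr : 1 ≤ r) (ht : -1 ≤ t) (ht1 : t ≤ 1) : 0 < Afn r t :=
  lt_of_lt_of_le one_pos (one_le_Afn hr ht ht1)


lemma hasDerivAt_Afn {r : ℝ} (hr : 1 ≤ r) (t : ℝ) :
    HasDerivAt (Afn r) (dA r t) t := by
  have h1 : HasDerivAt (fun t : ℝ => 1 + t) 1 t := by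
    simpa using (hasDerivAt_id t).const_add 1
  have h2 : HasDerivAt (fun t : ℝ => 1 - t) (-1) t := by
    exact (hasDerivAt_id' t).const_sub 1
  have h3 := h1.rpow_const (p := r) (Or.inr hr)
  have h4 := h2.rpow_const (p := r) (Or.inr hr)
  have := (h3.add h4).div_const 2
  refine this.congr_deriv ?_
  unfold dA
  ring

lemma hasDerivAt_dA {r : ℝ} (t : ℝ) (h1 : (1:ℝ) + t ≠ 0) (h2 : (1:ℝ) - t ≠ 0) :
    HasDerivAt (dA r) (ddA r t) t := by
  have k1 : HasDerivAt (fun t : ℝ => 1 + t) 1 t := by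
    simpa using (hasDerivAt_id t).const_add 1
  have k2 : HasDerivAt (fun t : ℝ => 1 - t) (-1) t := by
    exact (hasDerivAt_id' t).const_sub 1
  have h3 := (k1.rpow_const (p := r-1) (Or.inl h1)).const_mul r
  have h4 := (k2.rpow_const (p := r-1) (Or.inl h2)).const_mul r
  have := (h3.sub h4).div_const 2
  refine this.congr_deriv ?_
  unfold ddA
  rw [show r - 1 - 1 = r - 2 by ring]
  ring

lemma master {P Q : ℝ} (hP : 1 < P) (hPQ : P ≤ Q) (hQ2 : Q ≤ 2) {t : ℝ}
    (ht0 : 0 ≤ t) (ht1 : t ≤ 1) :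
    Afn Q (Real.sqrt ((P-1)/(Q-1)) * t) ≤ (Afn P t)^(Q/P) := by
  have hQ1 : 1 < Q := lt_of_lt_of_le hP hPQ
  have hP0 : (0:ℝ) < P := by linarith
  set ρ := Real.sqrt ((P-1)/(Q-1)) with hρ
  have hfrac0 : 0 ≤ (P-1)/(Q-1) := div_nonneg (by linarith) (by linarith)
  have hρ0 : 0 ≤ ρ := Real.sqrt_nonneg _
  have hρ1 : ρ ≤ 1 := by
    rw [hρ]
    calc Real.sqrt ((P-1)/(Q-1)) ≤ Real.sqrt 1 :=
          Real.sqrt_le_sqrt (by rw [div_le_one (by linarith)]; linarith)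
      _ = 1 := Real.sqrt_one
  have hρsq : ρ^2 * (Q-1) = P-1 := by
    rw [hρ, Real.sq_sqrt hfrac0, div_mul_cancel₀ _ (show Q-1 ≠ 0 by linarith)]
  have hQP1 : 1 ≤ Q/P := (one_le_div hP0).mpr hPQ
  -- functions
  set Φ : ℝ → ℝ := fun t => (Afn P t)^(Q/P) - Afn Q (ρ*t) with hΦdef
  set Dφ : ℝ → ℝ := fun t => (Q/P)*((Afn P t)^(Q/P-1)*(dA P t)) - ρ * dA Q (ρ*t) with hDφdef
  set DDφ : ℝ → ℝ := fun t =>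
      (Q/P)*(((Q/P-1)*(Afn P t)^(Q/P-2)*(dA P t))*(dA P t) + (Afn P t)^(Q/P-1)*(ddA P t))
      - ρ*(ddA Q (ρ*t)*ρ) with hDDφdef
  -- positivity of Afn P on [0,1]
  have hApos : ∀ x : ℝ, 0 ≤ x → x ≤ 1 → 0 < Afn P x := fun x h1 h2 =>
    Afn_pos hP.le (by linarith) h2
  -- derivative of Φ
  have hΦ' : ∀ x ∈ Ico (0:ℝ) 1, HasDerivAt Φ (Dφ x) x := by
    intro x hx
    have h1 := (hasDerivAt_Afn hP.le x).rpow_const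
      (p := Q/P) (Or.inl (hApos x hx.1 hx.2.le).ne')
    have hlin : HasDerivAt (fun t : ℝ => ρ*t) ρ x := by
      simpa using (hasDerivAt_id x).const_mul ρ
    have h2 : HasDerivAt (fun t : ℝ => Afn Q (ρ*t)) (dA Q (ρ*x) * ρ) x :=
      (hasDerivAt_Afn hQ1.le (ρ*x)).comp x hlin
    have := h1.sub h2
    refine this.congr_deriv ?_
    simp only [hDφdef]
    ring
  -- derivative of Dφ
  have hDφ' : ∀ x ∈ Ico (0:ℝ) 1, HasDerivAt Dφ (DDφ x) x := by
    intro x hx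
    have hx1 : (0:ℝ) < 1 + x := by have := hx.1; linarith
    have hx2 : (0:ℝ) < 1 - x := by have := hx.2; linarith
    have hρx0 : 0 ≤ ρ*x := mul_nonneg hρ0 hx.1
    have hρx1 : ρ*x < 1 := lt_of_le_of_lt
      (by nlinarith [hx.1, hx.2] : ρ*x ≤ x) hx.2
    have hu : HasDerivAt (fun t => (Afn P t)^(Q/P-1))
        ((Q/P-1) * (Afn P x)^(Q/P-2) * dA P x) x := by
      have := (hasDerivAt_Afn hP.le x).rpow_const
        (p := Q/P-1) (Or.inl (hApos x hx.1 hx.2.le).ne')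
      convert this using 1
      rw [show Q/P-1-1 = Q/P-2 by ring]
      ring
    have hv : HasDerivAt (dA P) (ddA P x) x := hasDerivAt_dA x hx1.ne' hx2.ne'
    have hfirst := (hu.mul hv).const_mul (Q/P)
    have hlin : HasDerivAt (fun t : ℝ => ρ*t) ρ x := by
      simpa using (hasDerivAt_id x).const_mul ρ
    have h2 : HasDerivAt (fun t : ℝ => dA Q (ρ*t)) (ddA Q (ρ*x) * ρ) x :=
      (hasDerivAt_dA (ρ*x) (by linarith : (1:ℝ)+ρ*x ≠ 0) (by linarith : (1:ℝ)-ρ*x ≠ 0)).comp x hlin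
    have := hfirst.sub (h2.const_mul ρ)
    exact this.congr_deriv rfl
  -- nonnegativity of DDφ on Ico 0 1
  have hDD0 : ∀ x ∈ Ico (0:ℝ) 1, 0 ≤ DDφ x := by
    intro x hx
    have hx1 : (0:ℝ) < 1 + x := by have := hx.1; linarith
    have hx2 : (0:ℝ) < 1 - x := by have := hx.2; linarith
    have hρx0 : 0 ≤ ρ*x := mul_nonneg hρ0 hx.1
    have hρxx : ρ*x ≤ x := by nlinarith [hx.1]
    -- term 1 nonneg
    have hterm1 : 0 ≤ ((Q/P-1)*(Afn P x)^(Q/P-2)*(dA P x))*(dA P x) := by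
      have h1 : 0 ≤ (Q/P-1) := by linarith
      have h2 : 0 ≤ (Afn P x)^(Q/P-2) := Real.rpow_nonneg (hApos x hx.1 hx.2.le).le _
      nlinarith [sq_nonneg (dA P x), mul_nonneg h1 h2]
    -- S comparison
    have hS1 : (1+ρ*x)^(Q-2) + (1-ρ*x)^(Q-2) ≤ (1+x)^(Q-2) + (1-x)^(Q-2) :=
      S_mono (by linarith) hρx0 hρxx hx.2
    have hS2 : (1+x)^(Q-2) + (1-x)^(Q-2) ≤ (1+x)^(P-2) + (1-x)^(P-2) :=
      exp_mono (by linarith) hx2 (by nlinarith) (by linarith) (by linarith)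
    have hA1 : 1 ≤ (Afn P x)^(Q/P-1) :=
      Real.one_le_rpow (one_le_Afn hP.le (by linarith) hx.2.le) (by linarith)
    have hSP0 : 0 ≤ (1+x)^(P-2) + (1-x)^(P-2) :=
      add_nonneg (Real.rpow_nonneg hx1.le _) (Real.rpow_nonneg hx2.le _)
    have hkey : (1+ρ*x)^(Q-2) + (1-ρ*x)^(Q-2)
        ≤ (Afn P x)^(Q/P-1) * ((1+x)^(P-2) + (1-x)^(P-2)) := by
      calc (1+ρ*x)^(Q-2) + (1-ρ*x)^(Q-2) ≤ (1+x)^(P-2) + (1-x)^(P-2) := hS1.trans hS2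
        _ = 1 * ((1+x)^(P-2) + (1-x)^(P-2)) := (one_mul _).symm
        _ ≤ (Afn P x)^(Q/P-1) * ((1+x)^(P-2) + (1-x)^(P-2)) :=
            mul_le_mul_of_nonneg_right hA1 hSP0
    -- assemble
    have hterm2 : ρ*(ddA Q (ρ*x)*ρ) ≤ (Q/P)*((Afn P x)^(Q/P-1)*(ddA P x)) := by
      have e1 : ρ*(ddA Q (ρ*x)*ρ) = (Q*(P-1)/2) * ((1+ρ*x)^(Q-2) + (1-ρ*x)^(Q-2)) := by
        simp only [ddA]
        linear_combination (Q*((1+ρ*x)^(Q-2)+(1-ρ*x)^(Q-2))/2) * hρsq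
      have e2 : (Q/P)*((Afn P x)^(Q/P-1)*(ddA P x))
          = (Q*(P-1)/2) * ((Afn P x)^(Q/P-1) * ((1+x)^(P-2) + (1-x)^(P-2))) := by
        simp only [ddA]
        field_simp
      rw [e1, e2]
      apply mul_le_mul_of_nonneg_left hkey
      nlinarith
    simp only [hDDφdef]
    have expand : (Q/P)*(((Q/P-1)*(Afn P x)^(Q/P-2)*(dA P x))*(dA P x)
        + (Afn P x)^(Q/P-1)*(ddA P x))
        = (Q/P)*(((Q/P-1)*(Afn P x)^(Q/P-2)*(dA P x))*(dA P x))
          + (Q/P)*((Afn P x)^(Q/P-1)*(ddA P x)) := by ring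
    rw [expand]
    have : 0 ≤ (Q/P)*(((Q/P-1)*(Afn P x)^(Q/P-2)*(dA P x))*(dA P x)) := by positivity
    linarith
  -- Dφ 0 = 0
  have hdA0 : ∀ r : ℝ, dA r 0 = 0 := by
    intro r; simp [dA]
  have hDφ0 : Dφ 0 = 0 := by
    simp only [hDφdef, mul_zero, hdA0]
    ring
  -- Dφ ≥ 0 on Ico 0 1
  have hDφnn : ∀ x ∈ Ico (0:ℝ) 1, 0 ≤ Dφ x := by
    have hmono : MonotoneOn Dφ (Ico 0 1) := by
      apply monotoneOn_of_deriv_nonneg (convex_Ico 0 1)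
      · exact fun x hx => (hDφ' x hx).continuousAt.continuousWithinAt
      · intro x hx
        rw [interior_Ico] at hx
        exact (hDφ' x (Ioo_subset_Ico_self hx)).differentiableAt.differentiableWithinAt
      · intro x hx
        rw [interior_Ico] at hx
        rw [(hDφ' x (Ioo_subset_Ico_self hx)).deriv]
        exact hDD0 x (Ioo_subset_Ico_self hx)
    intro x hx
    have := hmono (show (0:ℝ) ∈ Ico (0:ℝ) 1 by constructor <;> norm_num) hx hx.1
    rw [hDφ0] at this
    exact this
  -- Φ 0 = 0
  have hΦ0 : Φ 0 = 0 := by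
    simp only [hΦdef, mul_zero, Afn_zero, Real.one_rpow]
    ring
  -- Φ ≥ 0 on Ico 0 1
  have hΦnn : ∀ x ∈ Ico (0:ℝ) 1, 0 ≤ Φ x := by
    have hmono : MonotoneOn Φ (Ico 0 1) := by
      apply monotoneOn_of_deriv_nonneg (convex_Ico 0 1)
      · exact fun x hx => (hΦ' x hx).continuousAt.continuousWithinAt
      · intro x hx
        rw [interior_Ico] at hx
        exact (hΦ' x (Ioo_subset_Ico_self hx)).differentiableAt.differentiableWithinAt
      · intro x hx
        rw [interior_Ico] at hx
        rw [(hΦ' x (Ioo_subset_Ico_self hx)).deriv]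
        exact hDφnn x (Ioo_subset_Ico_self hx)
    intro x hx
    have := hmono (show (0:ℝ) ∈ Ico (0:ℝ) 1 by constructor <;> norm_num) hx hx.1
    rw [hΦ0] at this
    exact this
  -- extend to t = 1 by continuity
  have hΦcont : Continuous Φ := by
    have c1 : Continuous (fun t : ℝ => Afn P t) := by
      apply Continuous.div_const
      apply Continuous.add
      · exact (continuous_const.add continuous_id).rpow_const (fun x => Or.inr (by linarith))
      · exact (continuous_const.sub continuous_id).rpow_const (fun x => Or.inr (by linarith))
    have c2 : Continuous (fun t : ℝ => (Afn P t)^(Q/P)) :=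
      c1.rpow_const (fun x => Or.inr (by positivity))
    have c3 : Continuous (fun t : ℝ => Afn Q (ρ*t)) := by
      have c4 : Continuous (fun t : ℝ => Afn Q t) := by
        apply Continuous.div_const
        apply Continuous.add
        · exact (continuous_const.add continuous_id).rpow_const (fun x => Or.inr (by linarith))
        · exact (continuous_const.sub continuous_id).rpow_const (fun x => Or.inr (by linarith))
      exact c4.comp (continuous_const.mul continuous_id)
    exact c2.sub c3
  have hclosed : IsClosed {x : ℝ | 0 ≤ Φ x} := isClosed_le continuous_const hΦcont
  have hsubset : Icc (0:ℝ) 1 ⊆ {x : ℝ | 0 ≤ Φ x} := by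
    rw [← closure_Ico (show (0:ℝ) ≠ 1 by norm_num)]
    exact closure_minimal hΦnn hclosed
  have := hsubset (mem_Icc.mpr ⟨ht0, ht1⟩)
  simp only [mem_setOf_eq, hΦdef] at this
  linarith

lemma sqrt_le_one' {x : ℝ} (h : x ≤ 1) : Real.sqrt x ≤ 1 := by
  calc Real.sqrt x ≤ Real.sqrt 1 := Real.sqrt_le_sqrt h
    _ = 1 := Real.sqrt_one

lemma one_le_Afn_rpow {r t e : ℝ} (hr : 1 ≤ r) (ht : -1 ≤ t) (ht1 : t ≤ 1) (he : 0 ≤ e) :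
    1 ≤ (Afn r t)^e :=
  Real.one_le_rpow (one_le_Afn hr ht ht1) he

lemma master_norm {P Q : ℝ} (hP : 1 < P) (hPQ : P ≤ Q) (hQ2 : Q ≤ 2) {t : ℝ}
    (ht0 : 0 ≤ t) (ht1 : t ≤ 1) :
    (Afn Q (Real.sqrt ((P-1)/(Q-1)) * t))^(1/Q) ≤ (Afn P t)^(1/P) := by
  have hQ1 : 1 < Q := lt_of_lt_of_le hP hPQ
  have h := master hP hPQ hQ2 ht0 ht1
  have h2 := Real.rpow_le_rpow (by
      apply (Afn_pos hQ1.le _ _).le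
      · have := Real.sqrt_nonneg ((P-1)/(Q-1)); nlinarith
      · have h1 : Real.sqrt ((P-1)/(Q-1)) ≤ 1 := by
          calc Real.sqrt ((P-1)/(Q-1)) ≤ Real.sqrt 1 :=
            Real.sqrt_le_sqrt (by rw [div_le_one (by linarith)]; linarith)
          _ = 1 := Real.sqrt_one
        have := Real.sqrt_nonneg ((P-1)/(Q-1))
        nlinarith) h (by positivity : (0:ℝ) ≤ 1/Q)
  rwa [← Real.rpow_mul (Afn_pos hP.le (by linarith) ht1).le,
    show Q/P*(1/Q) = 1/P by field_simp] at h2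

set_option maxHeartbeats 1000000 in
lemma norm_ineq_aux {σ p q δ ε : ℝ} (hσ0 : 0 < σ) (hσ1 : σ < 1)
    (hp1 : 1 < p) (hq1 : 1 < q) (hpq : (p-1)*(q-1) = σ^2) (hpleq : p ≤ q)
    (hδ0 : 0 ≤ δ) (hδ1 : δ ≤ 1) (hε0 : 0 ≤ ε) (hε1 : ε ≤ 1) :
    1 + σ*δ*ε ≤ (Afn p δ)^(1/p) * (Afn q ε)^(1/q) := by
  have hp2 : p < 2 := by nlinarith
  rcases le_or_gt q 2 with hq2 | hq2
  · -- both ≤ 2 : Cauchy-Schwarz route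
    have hs1 : Real.sqrt (p-1) ≤ 1 := sqrt_le_one' (by linarith)
    have hs2 : Real.sqrt (q-1) ≤ 1 := sqrt_le_one' (by linarith)
    have hs1' : Real.sqrt (p-1) ^ 2 = p - 1 := Real.sq_sqrt (by linarith)
    have hs2' : Real.sqrt (q-1) ^ 2 = q - 1 := Real.sq_sqrt (by linarith)
    have hAfn2 : ∀ r x : ℝ, 1 < r → r ≤ 2 → 0 ≤ x → x ≤ 1 →
        1 + (r-1)*x^2 ≤ (Afn r x)^(2/r) := by
      intro r x hr1 hr2 hx0 hx1
      have hsr : Real.sqrt (r-1) ≤ 1 := sqrt_le_one' (by linarith)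
      have hsr0 : 0 ≤ Real.sqrt (r-1) := Real.sqrt_nonneg _
      have h := master hr1 hr2 (le_refl 2) hx0 hx1
      rw [show (2:ℝ)-1 = 1 by norm_num, div_one] at h
      rwa [Afn_two (by nlinarith) (by nlinarith),
        mul_pow, Real.sq_sqrt (by linarith : (0:ℝ) ≤ r-1)] at h
    have m1 := hAfn2 p δ hp1 hp2.le hδ0 hδ1
    have m2 := hAfn2 q ε hq1 hq2 hε0 hε1
    have r1 : (1+(p-1)*δ^2)^((1:ℝ)/2) ≤ (Afn p δ)^(1/p) := by
      have := Real.rpow_le_rpow (by nlinarith : (0:ℝ) ≤ 1+(p-1)*δ^2) m1 (by norm_num : (0:ℝ) ≤ 1/2)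
      rwa [← Real.rpow_mul (Afn_pos hp1.le (by linarith) hδ1).le,
        show 2/p*(1/2) = 1/p by ring] at this
    have r2 : (1+(q-1)*ε^2)^((1:ℝ)/2) ≤ (Afn q ε)^(1/q) := by
      have := Real.rpow_le_rpow (by nlinarith : (0:ℝ) ≤ 1+(q-1)*ε^2) m2 (by norm_num : (0:ℝ) ≤ 1/2)
      rwa [← Real.rpow_mul (Afn_pos hq1.le (by linarith) hε1).le,
        show 2/q*(1/2) = 1/q by ring] at this
    have ee : σ^2*(δ*ε)^2 = (p-1)*(q-1)*(δ*ε)^2 := by linear_combination (-(δ*ε)^2) * hpq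
    have hRHS0 : 0 ≤ (p-1)*δ^2 + (q-1)*ε^2 := by nlinarith
    have h1 : (2*σ*δ*ε)^2 ≤ ((p-1)*δ^2+(q-1)*ε^2)^2 := by
      linarith [ee, sq_nonneg ((p-1)*δ^2 - (q-1)*ε^2)]
    have hAM : 2*σ*δ*ε ≤ (p-1)*δ^2 + (q-1)*ε^2 := by
      have h2 := Real.sqrt_le_sqrt h1
      rw [Real.sqrt_sq_eq_abs, Real.sqrt_sq_eq_abs, abs_of_nonneg hRHS0] at h2
      exact le_trans (le_abs_self _) h2
    have key : (1+σ*δ*ε)^2 ≤ (1+(p-1)*δ^2)*(1+(q-1)*ε^2) := by linarith [hAM, ee]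
    have key2 : 1+σ*δ*ε ≤ (1+(p-1)*δ^2)^((1:ℝ)/2) * (1+(q-1)*ε^2)^((1:ℝ)/2) := by
      have h10 : (0:ℝ) ≤ 1+σ*δ*ε := by positivity
      have hX : (0:ℝ) ≤ 1+(p-1)*δ^2 := by nlinarith
      have hY : (0:ℝ) ≤ 1+(q-1)*ε^2 := by nlinarith
      have hs : 1+σ*δ*ε ≤ Real.sqrt ((1+(p-1)*δ^2)*(1+(q-1)*ε^2)) :=
        (Real.le_sqrt h10 (mul_nonneg hX hY)).mpr key
      rwa [Real.sqrt_mul hX, Real.sqrt_eq_rpow, Real.sqrt_eq_rpow] at hs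
    calc 1+σ*δ*ε ≤ (1+(p-1)*δ^2)^((1:ℝ)/2) * (1+(q-1)*ε^2)^((1:ℝ)/2) := key2
      _ ≤ (Afn p δ)^(1/p) * (Afn q ε)^(1/q) := by
          exact mul_le_mul r1 r2 (Real.rpow_nonneg (by nlinarith) _)
            (Real.rpow_nonneg (Afn_pos hp1.le (by linarith) hδ1).le _)
  · -- q > 2 : Hölder route
    set q' := q/(q-1) with hq'def
    have hq10 : (0:ℝ) < q - 1 := by linarith
    have hq'1 : 1 < q' := by rw [hq'def, lt_div_iff₀ hq10]; linarith
    have hq'2 : q' ≤ 2 := by rw [hq'def, div_le_iff₀ hq10]; linarith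
    have hpq' : p ≤ q' := by rw [hq'def, le_div_iff₀ hq10]; nlinarith
    have hρval : (p-1)/(q'-1) = σ^2 := by
      rw [hq'def]
      field_simp
      linarith [hpq]
    have hρ : Real.sqrt ((p-1)/(q'-1)) = σ := by rw [hρval, Real.sqrt_sq hσ0.le]
    have hσδ1 : σ*δ ≤ 1 := by nlinarith
    have hσδ0 : 0 ≤ σ*δ := mul_nonneg hσ0.le hδ0
    -- Hölder on two points
    have hconj : q'.HolderConjugate q := (Real.HolderConjugate.conjExponent hq1).symm
    have holder := Real.inner_le_Lp_mul_Lq_of_nonneg (s := (Finset.univ : Finset Bool))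
      (f := fun b => if b then 1+σ*δ else 1-σ*δ) (g := fun b => if b then 1+ε else 1-ε)
      hconj
      (by intro i _; split <;> nlinarith)
      (by intro i _; split <;> nlinarith)
    rw [Fintype.sum_bool, Fintype.sum_bool, Fintype.sum_bool] at holder
    simp only [if_true, if_false, Bool.false_eq_true] at holder
    have e1 : (1+σ*δ) * (1+ε) + (1-σ*δ) * (1-ε) = 2*(1 + σ*δ*ε) := by ring
    have e2 : (1+σ*δ)^q' + (1-σ*δ)^q' = 2 * Afn q' (σ*δ) := by
      unfold Afn; ring
    have e3 : (1+ε)^q + (1-ε)^q = 2 * Afn q ε := by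
      unfold Afn; ring
    rw [e1, e2, e3] at holder
    have hA1 : 0 ≤ Afn q' (σ*δ) := (Afn_pos hq'1.le (by linarith) hσδ1).le
    have hA2 : 0 ≤ Afn q ε := (Afn_pos hq1.le (by linarith) hε1).le
    rw [Real.mul_rpow (by norm_num) hA1, Real.mul_rpow (by norm_num) hA2] at holder
    have e4 : (2:ℝ)^((1:ℝ)/q') * (Afn q' (σ*δ))^((1:ℝ)/q') * ((2:ℝ)^((1:ℝ)/q) * (Afn q ε)^((1:ℝ)/q))
        = ((2:ℝ)^((1:ℝ)/q') * (2:ℝ)^((1:ℝ)/q)) * ((Afn q' (σ*δ))^((1:ℝ)/q') * (Afn q ε)^((1:ℝ)/q)) := by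
      ring
    have e5 : (2:ℝ)^((1:ℝ)/q') * (2:ℝ)^((1:ℝ)/q) = 2 := by
      rw [← Real.rpow_add (by norm_num : (0:ℝ) < 2)]
      have := hconj.inv_add_inv_eq_one
      rw [show (1:ℝ)/q' + 1/q = q'⁻¹ + q⁻¹ by rw [one_div, one_div], this, Real.rpow_one]
    rw [e4, e5] at holder
    have main : 1 + σ*δ*ε ≤ (Afn q' (σ*δ))^((1:ℝ)/q') * (Afn q ε)^((1:ℝ)/q) := by linarith
    -- apply master to the first factor
    have hm : (Afn q' (σ*δ))^((1:ℝ)/q') ≤ (Afn p δ)^((1:ℝ)/p) := by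
      have := master_norm hp1 hpq' hq'2 hδ0 hδ1
      rwa [hρ] at this
    calc 1 + σ*δ*ε ≤ (Afn q' (σ*δ))^((1:ℝ)/q') * (Afn q ε)^((1:ℝ)/q) := main
      _ ≤ (Afn p δ)^((1:ℝ)/p) * (Afn q ε)^((1:ℝ)/q) :=
          mul_le_mul_of_nonneg_right hm (by positivity)

lemma norm_ineq_nn {σ p q δ ε : ℝ} (hσ0 : 0 < σ) (hσ1 : σ < 1)
    (hp1 : 1 < p) (hq1 : 1 < q) (hpq : (p-1)*(q-1) = σ^2)
    (hδ0 : 0 ≤ δ) (hδ1 : δ ≤ 1) (hε0 : 0 ≤ ε) (hε1 : ε ≤ 1) :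
    1 + σ*δ*ε ≤ (Afn p δ)^(1/p) * (Afn q ε)^(1/q) := by
  rcases le_total p q with h | h
  · exact norm_ineq_aux hσ0 hσ1 hp1 hq1 hpq h hδ0 hδ1 hε0 hε1
  · have := norm_ineq_aux hσ0 hσ1 hq1 hp1 (by rw [mul_comm]; exact hpq) h hε0 hε1 hδ0 hδ1
    calc 1+σ*δ*ε = 1+σ*ε*δ := by ring
      _ ≤ (Afn q ε)^(1/q) * (Afn p δ)^(1/p) := this
      _ = (Afn p δ)^(1/p) * (Afn q ε)^(1/q) := mul_comm _ _

lemma norm_ineq {σ p q δ ε : ℝ} (hσ0 : 0 < σ) (hσ1 : σ < 1)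
    (hp : 1 ≤ p) (hq : 1 ≤ q) (hpq : (p-1)*(q-1) = σ^2)
    (hδ1 : -1 ≤ δ) (hδ2 : δ ≤ 1) (hε1 : -1 ≤ ε) (hε2 : ε ≤ 1) :
    1 + σ*δ*ε ≤ (Afn p δ)^(1/p) * (Afn q ε)^(1/q) := by
  have hσ2 : 0 < σ^2 := pow_pos hσ0 2
  have hp1 : 1 < p := by nlinarith
  have hq1 : 1 < q := by nlinarith
  have hA1 : 1 ≤ (Afn p δ)^(1/p) :=
    one_le_Afn_rpow hp1.le hδ1 hδ2 (by positivity)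
  have hA2 : 1 ≤ (Afn q ε)^(1/q) :=
    one_le_Afn_rpow hq1.le hε1 hε2 (by positivity)
  rcases le_or_gt (δ*ε) 0 with hde | hde
  · have h2 : (1:ℝ) ≤ (Afn p δ)^(1/p) * (Afn q ε)^(1/q) := by
      calc (1:ℝ) = 1*1 := by ring
        _ ≤ (Afn p δ)^(1/p) * (Afn q ε)^(1/q) :=
            mul_le_mul hA1 hA2 zero_le_one (le_trans zero_le_one hA1)
    nlinarith
  · rcases le_or_gt 0 δ with hδ0 | hδ0
    · have hε0 : 0 ≤ ε := by nlinarith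
      exact norm_ineq_nn hσ0 hσ1 hp1 hq1 hpq hδ0 hδ2 hε0 hε2
    · have hε0 : ε < 0 := by nlinarith
      have := norm_ineq_nn hσ0 hσ1 hp1 hq1 hpq (by linarith : (0:ℝ) ≤ -δ) (by linarith)
        (by linarith : (0:ℝ) ≤ -ε) (by linarith)
      rw [Afn_neg, Afn_neg] at this
      calc 1+σ*δ*ε = 1+σ*(-δ)*(-ε) := by ring
        _ ≤ (Afn p δ)^(1/p) * (Afn q ε)^(1/q) := this

lemma core {σ p q a b c e : ℝ} (hσ0 : 0 < σ) (hσ1 : σ < 1)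
    (hp : 1 ≤ p) (hq : 1 ≤ q) (hpq : (p-1)*(q-1) = σ^2)
    (ha : 0 ≤ a) (hb : 0 ≤ b) (hc : 0 ≤ c) (he : 0 ≤ e) :
    (1+σ)/4*(a*c + b*e) + (1-σ)/4*(a*e + b*c)
      ≤ ((a^p + b^p)/2)^(1/p) * ((c^q + e^q)/2)^(1/q) := by
  have hσ2 : 0 < σ^2 := pow_pos hσ0 2
  have hp1 : 1 < p := by nlinarith
  have hq1 : 1 < q := by nlinarith
  have hp0 : p ≠ 0 := by linarith
  have hq0 : q ≠ 0 := by linarith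
  rcases eq_or_lt_of_le (by positivity : (0:ℝ) ≤ a + b) with hab | hab
  · -- a = b = 0
    have ha0 : a = 0 := by linarith
    have hb0 : b = 0 := by linarith
    rw [ha0, hb0]
    have : ((0:ℝ)^p + 0^p)/2 = 0 := by
      rw [Real.zero_rpow hp0]; norm_num
    rw [this, Real.zero_rpow (by positivity : 1/p ≠ 0)]
    ring_nf
    positivity
  rcases eq_or_lt_of_le (by positivity : (0:ℝ) ≤ c + e) with hce | hce
  · have hc0 : c = 0 := by linarith
    have he0 : e = 0 := by linarith
    rw [hc0, he0]
    have : ((0:ℝ)^q + 0^q)/2 = 0 := by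
      rw [Real.zero_rpow hq0]; norm_num
    rw [this, Real.zero_rpow (by positivity : 1/q ≠ 0), mul_zero]
    ring_nf
    positivity
  -- normalize
  set s := (a+b)/2 with hs
  set r := (c+e)/2 with hr
  have hs0 : 0 < s := by positivity
  have hr0 : 0 < r := by positivity
  set δ := (a-b)/(a+b) with hδ
  set ε := (c-e)/(c+e) with hε
  have hδ1 : -1 ≤ δ := by rw [hδ, le_div_iff₀ hab]; linarith
  have hδ2 : δ ≤ 1 := by rw [hδ, div_le_one hab]; linarith
  have hε1 : -1 ≤ ε := by rw [hε, le_div_iff₀ hce]; linarith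
  have hε2 : ε ≤ 1 := by rw [hε, div_le_one hce]; linarith
  have hae : a = s*(1+δ) := by rw [hs, hδ]; field_simp; ring
  have hbe : b = s*(1-δ) := by rw [hs, hδ]; field_simp; ring
  have hce' : c = r*(1+ε) := by rw [hr, hε]; field_simp; ring
  have hee : e = r*(1-ε) := by rw [hr, hε]; field_simp; ring
  have h1δ0 : (0:ℝ) ≤ 1+δ := by linarith
  have h1δ0' : (0:ℝ) ≤ 1-δ := by linarith
  have h1ε0 : (0:ℝ) ≤ 1+ε := by linarith
  have h1ε0' : (0:ℝ) ≤ 1-ε := by linarith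
  have hLHS : (1+σ)/4*(a*c + b*e) + (1-σ)/4*(a*e + b*c) = s*r*(1+σ*δ*ε) := by
    rw [hae, hbe, hce', hee]; ring
  have hap : a^p + b^p = s^p * (2 * Afn p δ) := by
    rw [hae, hbe, Real.mul_rpow hs0.le h1δ0, Real.mul_rpow hs0.le h1δ0']
    unfold Afn; ring
  have hcq : c^q + e^q = r^q * (2 * Afn q ε) := by
    rw [hce', hee, Real.mul_rpow hr0.le h1ε0, Real.mul_rpow hr0.le h1ε0']
    unfold Afn; ring
  have hAp0 : 0 ≤ Afn p δ := (Afn_pos hp1.le hδ1 hδ2).le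
  have hAq0 : 0 ≤ Afn q ε := (Afn_pos hq1.le hε1 hε2).le
  have hRHS : ((a^p + b^p)/2)^(1/p) * ((c^q + e^q)/2)^(1/q)
      = (s*r) * ((Afn p δ)^(1/p) * (Afn q ε)^(1/q)) := by
    rw [hap, hcq]
    rw [show s^p * (2 * Afn p δ)/2 = s^p * Afn p δ by ring,
        show r^q * (2 * Afn q ε)/2 = r^q * Afn q ε by ring,
        Real.mul_rpow (Real.rpow_nonneg hs0.le p) hAp0,
        Real.mul_rpow (Real.rpow_nonneg hr0.le q) hAq0,
        ← Real.rpow_mul hs0.le, ← Real.rpow_mul hr0.le,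
        mul_one_div_cancel hp0, mul_one_div_cancel hq0,
        Real.rpow_one, Real.rpow_one]
    ring
  rw [hLHS, hRHS]
  apply mul_le_mul_of_nonneg_left _ (by positivity : (0:ℝ) ≤ s*r)
  exact norm_ineq hσ0 hσ1 hp hq hpq hδ1 hδ2 hε1 hε2

lemma noiseW_nonneg {σ : ℝ} (hσ0 : 0 ≤ σ) (hσ1 : σ ≤ 1) {d : ℕ} (y x : Fin d → Bool) :
    0 ≤ noiseW σ y x := by
  apply Finset.prod_nonneg
  intro i _
  split <;> linarith

lemma noiseW_succ (σ : ℝ) {d : ℕ} (b' b : Bool) (z' z : Fin d → Bool) :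
    noiseW σ (Fin.cons b' z') (Fin.cons b z)
      = (if b' = b then (1+σ)/2 else (1-σ)/2) * noiseW σ z' z := by
  unfold noiseW
  rw [Fin.prod_univ_succ]
  simp only [Fin.cons_zero, Fin.cons_succ]

lemma sum_succ {d : ℕ} (F : (Fin (d+1) → Bool) → ℝ) :
    ∑ x : Fin (d+1) → Bool, F x = ∑ b : Bool, ∑ z : Fin d → Bool, F (Fin.cons b z) := by
  rw [← Equiv.sum_comp (Fin.consEquiv (fun _ => Bool)) F, Fintype.sum_prod_type]
  rfl

lemma hExp_nonneg {d : ℕ} {F : (Fin d → Bool) → ℝ} (h : ∀ x, 0 ≤ F x) : 0 ≤ hExp d F := by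
  unfold hExp
  apply div_nonneg _ (by positivity)
  exact Finset.sum_nonneg (fun x _ => h x)

lemma hNorm_nonneg (d : ℕ) (p : ℝ) (f : (Fin d → Bool) → ℝ) : 0 ≤ hNorm d p f := by
  unfold hNorm
  apply Real.rpow_nonneg
  exact hExp_nonneg (fun x => Real.rpow_nonneg (abs_nonneg _) _)

lemma hNorm_rpow {d : ℕ} {p : ℝ} (hp : 1 ≤ p) (f : (Fin d → Bool) → ℝ) :
    (hNorm d p f)^p = hExp d (fun x => |f x|^p) := by
  unfold hNorm
  rw [← Real.rpow_mul (hExp_nonneg (fun x => Real.rpow_nonneg (abs_nonneg _) _)),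
    one_div, inv_mul_cancel₀ (by linarith : p ≠ 0), Real.rpow_one]

lemma main_nonneg (σ p q : ℝ) (hσ0 : 0 < σ) (hσ1 : σ < 1) (hp : 1 ≤ p) (hq : 1 ≤ q)
    (hpq : (p-1)*(q-1) = σ^2) :
    ∀ (d : ℕ) (f g : (Fin d → Bool) → ℝ), (∀ x, 0 ≤ f x) → (∀ x, 0 ≤ g x) →
    hExp d (fun x => Tnoise σ f x * g x) ≤ hNorm d p f * hNorm d q g := by
  have hp0 : p ≠ 0 := by linarith
  have hq0 : q ≠ 0 := by linarith
  intro d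
  induction d with
  | zero =>
    intro f g hf hg
    set x₀ : Fin 0 → Bool := fun i => i.elim0 with hx₀
    have hsum : ∀ (G : (Fin 0 → Bool) → ℝ), (∑ y : Fin 0 → Bool, G y) = G x₀ := by
      intro G
      rw [Fintype.sum_unique G]
      exact congrArg G (Subsingleton.elim _ _)
    have hW : noiseW σ x₀ x₀ = 1 := by
      unfold noiseW
      simp
    have hT : Tnoise σ f x₀ = f x₀ := by
      unfold Tnoise
      rw [hsum (fun y => noiseW σ y x₀ * f y)]
      show noiseW σ x₀ x₀ * f x₀ = f x₀
      rw [hW, one_mul]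
    have hE : hExp 0 (fun x => Tnoise σ f x * g x) = f x₀ * g x₀ := by
      unfold hExp
      rw [hsum (fun x => Tnoise σ f x * g x)]
      show (Tnoise σ f x₀ * g x₀) / 2^0 = _
      rw [hT]
      norm_num
    have hNf : hNorm 0 p f = f x₀ := by
      unfold hNorm hExp
      rw [hsum (fun x => |f x|^p)]
      show (|f x₀|^p / 2^0)^(1/p) = _
      rw [show ((2:ℝ)^(0:ℕ)) = 1 by norm_num, div_one, abs_of_nonneg (hf x₀),
        ← Real.rpow_mul (hf x₀), mul_one_div_cancel hp0, Real.rpow_one]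
    have hNg : hNorm 0 q g = g x₀ := by
      unfold hNorm hExp
      rw [hsum (fun x => |g x|^q)]
      show (|g x₀|^q / 2^0)^(1/q) = _
      rw [show ((2:ℝ)^(0:ℕ)) = 1 by norm_num, div_one, abs_of_nonneg (hg x₀),
        ← Real.rpow_mul (hg x₀), mul_one_div_cancel hq0, Real.rpow_one]
    rw [hE, hNf, hNg]
  | succ d ih =>
    intro f g hf hg
    set w1 : Bool → Bool → ℝ := fun b' b => if b' = b then (1+σ)/2 else (1-σ)/2 with hw1
    have hw1nn : ∀ b' b, 0 ≤ w1 b' b := by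
      intro b' b
      rw [hw1]
      dsimp only
      split <;> linarith
    set fb : Bool → (Fin d → Bool) → ℝ := fun b' z => f (Fin.cons b' z) with hfb
    set gb : Bool → (Fin d → Bool) → ℝ := fun b z => g (Fin.cons b z) with hgb
    set Fp : Bool → ℝ := fun b' => hNorm d p (fb b') with hFp
    set Gq : Bool → ℝ := fun b => hNorm d q (gb b) with hGq
    -- decompose Tnoise
    have hT : ∀ (b : Bool) (z : Fin d → Bool),
        Tnoise σ f (Fin.cons b z) = ∑ b' : Bool, w1 b' b * Tnoise σ (fb b') z := by
      intro b z
      unfold Tnoise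
      rw [sum_succ (fun y => noiseW σ y (Fin.cons b z) * f y)]
      apply Finset.sum_congr rfl
      intro b' _
      rw [Finset.mul_sum]
      apply Finset.sum_congr rfl
      intro z' _
      rw [noiseW_succ]
      ring
    -- expectation decomposition
    have hE : hExp (d+1) (fun x => Tnoise σ f x * g x)
        = (∑ b : Bool, ∑ b' : Bool, w1 b' b *
            (2^d * hExp d (fun z => Tnoise σ (fb b') z * gb b z))) / 2^(d+1) := by
      unfold hExp
      congr 1
      rw [sum_succ (fun x => Tnoise σ f x * g x)]
      apply Finset.sum_congr rfl
      intro b _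
      have : ∀ z, Tnoise σ f (Fin.cons b z) * g (Fin.cons b z)
          = ∑ b' : Bool, w1 b' b * (Tnoise σ (fb b') z * gb b z) := by
        intro z
        rw [hT b z, Finset.sum_mul]
        apply Finset.sum_congr rfl
        intro b' _
        rw [hgb]
        ring
      rw [Finset.sum_congr rfl (fun z _ => this z), Finset.sum_comm]
      apply Finset.sum_congr rfl
      intro b' _
      rw [← Finset.mul_sum]
      congr 1
      rw [mul_div_cancel₀]
      positivity
    -- apply IH
    have step1 : hExp (d+1) (fun x => Tnoise σ f x * g x)
        ≤ (∑ b : Bool, ∑ b' : Bool, w1 b' b * (2^d * (Fp b' * Gq b))) / 2^(d+1) := by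
      rw [hE]
      gcongr with b hb b' hb'
      · exact ih (fb b') (gb b) (fun z => hf _) (fun z => hg _)
    have step2 : (∑ b : Bool, ∑ b' : Bool, w1 b' b * (2^d * (Fp b' * Gq b))) / 2^(d+1)
        = (1+σ)/4*(Fp true * Gq true + Fp false * Gq false)
          + (1-σ)/4*(Fp true * Gq false + Fp false * Gq true) := by
      rw [Fintype.sum_bool, Fintype.sum_bool, Fintype.sum_bool]
      have w11 : w1 true true = (1+σ)/2 := by simp [hw1]
      have w12 : w1 false true = (1-σ)/2 := by simp [hw1]
      have w13 : w1 true false = (1-σ)/2 := by simp [hw1]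
      have w14 : w1 false false = (1+σ)/2 := by simp [hw1]
      rw [w11, w12, w13, w14, pow_succ]
      have h2d : (0:ℝ) < 2^d := by positivity
      field_simp
      ring
    have hcore := core (σ := σ) (p := p) (q := q)
      (a := Fp true) (b := Fp false) (c := Gq true) (e := Gq false)
      hσ0 hσ1 hp hq hpq (hNorm_nonneg _ _ _) (hNorm_nonneg _ _ _)
      (hNorm_nonneg _ _ _) (hNorm_nonneg _ _ _)
    have hsumf : hExp (d+1) (fun x => |f x|^p)
        = (hExp d (fun z => |fb true z|^p) + hExp d (fun z => |fb false z|^p))/2 := by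
      unfold hExp
      rw [sum_succ (fun x => |f x|^p), Fintype.sum_bool, pow_succ]
      have h2d : ((2:ℝ)^d) ≠ 0 := by positivity
      field_simp
      rfl
    have hsumg : hExp (d+1) (fun x => |g x|^q)
        = (hExp d (fun z => |gb true z|^q) + hExp d (fun z => |gb false z|^q))/2 := by
      unfold hExp
      rw [sum_succ (fun x => |g x|^q), Fintype.sum_bool, pow_succ]
      have h2d : ((2:ℝ)^d) ≠ 0 := by positivity
      field_simp
      rfl
    have hNf : hNorm (d+1) p f = ((Fp true ^ p + Fp false ^ p)/2)^(1/p) := by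
      have e : (Fp true ^ p + Fp false ^ p)/2 = hExp (d+1) (fun x => |f x|^p) := by
        simp only [hFp]
        rw [hNorm_rpow hp, hNorm_rpow hp, hsumf]
      rw [e]
      rfl
    have hNg : hNorm (d+1) q g = ((Gq true ^ q + Gq false ^ q)/2)^(1/q) := by
      have e : (Gq true ^ q + Gq false ^ q)/2 = hExp (d+1) (fun x => |g x|^q) := by
        simp only [hGq]
        rw [hNorm_rpow hq, hNorm_rpow hq, hsumg]
      rw [e]
      rfl
    calc hExp (d+1) (fun x => Tnoise σ f x * g x)
        ≤ (∑ b : Bool, ∑ b' : Bool, w1 b' b * (2^d * (Fp b' * Gq b))) / 2^(d+1) := step1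
      _ = (1+σ)/4*(Fp true * Gq true + Fp false * Gq false)
          + (1-σ)/4*(Fp true * Gq false + Fp false * Gq true) := step2
      _ ≤ ((Fp true ^ p + Fp false ^ p)/2)^(1/p) * ((Gq true ^ q + Gq false ^ q)/2)^(1/q) := hcore
      _ = hNorm (d+1) p f * hNorm (d+1) q g := by rw [hNf, hNg]

theorem stmt10 (d : ℕ) (σ p q : ℝ) (hσ0 : 0 < σ) (hσ1 : σ < 1)
    (hp : 1 ≤ p) (hq : 1 ≤ q) (hpq : (p - 1) * (q - 1) = σ ^ 2)
    (f g : (Fin d → Bool) → ℝ) :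
    hExp d (fun x => Tnoise σ f x * g x) ≤ hNorm d p f * hNorm d q g := by
  have hpt : ∀ x, Tnoise σ f x * g x ≤ Tnoise σ (fun y => |f y|) x * |g x| := by
    intro x
    unfold Tnoise
    rw [Finset.sum_mul, Finset.sum_mul]
    apply Finset.sum_le_sum
    intro y _
    have hW := noiseW_nonneg hσ0.le hσ1.le y x
    calc noiseW σ y x * f y * g x ≤ |noiseW σ y x * f y * g x| := le_abs_self _
      _ = noiseW σ y x * |f y| * |g x| := by rw [abs_mul, abs_mul, abs_of_nonneg hW]
  have habs : hExp d (fun x => Tnoise σ f x * g x)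
      ≤ hExp d (fun x => Tnoise σ (fun y => |f y|) x * |g x|) := by
    unfold hExp
    apply div_le_div_of_nonneg_right ?_ (by positivity)
    exact Finset.sum_le_sum (fun x _ => hpt x)
  have hmain := main_nonneg σ p q hσ0 hσ1 hp hq hpq d (fun y => |f y|) (fun y => |g y|)
    (fun y => abs_nonneg _) (fun y => abs_nonneg _)
  have hfeq : hNorm d p (fun y => |f y|) = hNorm d p f := by
    unfold hNorm
    simp only [abs_abs]
  have hgeq : hNorm d q (fun y => |g y|) = hNorm d q g := by
    unfold hNorm
    simp only [abs_abs]
  rw [hfeq, hgeq] at hmain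
  exact le_trans habs hmain
end

section
/- (Robust expansion lower bound for the hypercube.) Fix σ ∈ (0,1), γ ∈ [0,1], m ≥ 1, and p, q ∈ [1,∞) with (p-1)(q-1) = σ². Define the robust expansion Φ_r(1/m, γ) as the minimum over sets A with μ(A) ≤ 1/m and sets B with Pr[x ∈ B ∣ y ∈ A] ≥ γ of the ratio μ(B)/μ(A), where x is uniform on {-1,1}^d, y ∼ N_σ(x), and μ is the uniform measure. Then Φ_r(1/m, γ) ≥ γ^q · m^{1 + q/p - q}. -/
open Real Set

/-- Indicator function of a finite set of points of the hypercube. -/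
noncomputable def chi {d : ℕ} (A : Finset (Fin d → Bool)) : (Fin d → Bool) → ℝ :=
  fun x => if x ∈ A then 1 else 0

namespace Stmt12

/-- `x ↦ (1+x)^c + (1-x)^c` is antitone on `[0,1]` for `c ∈ [0,1]`. -/
lemma hdec {c x y : ℝ} (hc0 : 0 ≤ c) (hc1 : c ≤ 1) (hx : 0 ≤ x) (hxy : x ≤ y) (hy : y ≤ 1) :
    (1 + y) ^ c + (1 - y) ^ c ≤ (1 + x) ^ c + (1 - x) ^ c := by
  rcases eq_or_lt_of_le (hx.trans hxy) with hy0 | hy0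
  · have : x = 0 := le_antisymm (hxy.trans hy0.symm.le) hx
    rw [this, ← hy0]
  · have hyne : y ≠ 0 := ne_of_gt hy0
    set l : ℝ := (y + x) / (2 * y) with hl
    have hl0 : 0 ≤ l := by positivity
    have hl1 : l ≤ 1 := by
      rw [hl, div_le_one (by linarith)]; linarith
    have hcc : ConcaveOn ℝ (Ici 0) fun t : ℝ => t ^ c := Real.concaveOn_rpow hc0 hc1
    have h1y : (0:ℝ) ≤ 1 + y := by linarith
    have h2y : (0:ℝ) ≤ 1 - y := by linarith
    have e1 : l * (1 + y) + (1 - l) * (1 - y) = 1 + x := by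
      rw [hl]; field_simp; ring
    have e2 : (1 - l) * (1 + y) + l * (1 - y) = 1 - x := by
      rw [hl]; field_simp; ring
    have c1 := hcc.2 (mem_Ici.2 h1y) (mem_Ici.2 h2y) hl0
      (show (0:ℝ) ≤ 1 - l by linarith) (show l + (1 - l) = 1 by ring)
    have c2 := hcc.2 (mem_Ici.2 h1y) (mem_Ici.2 h2y)
      (show (0:ℝ) ≤ 1 - l by linarith) hl0 (show (1 - l) + l = 1 by ring)
    simp only [smul_eq_mul] at c1 c2
    rw [e1] at c1
    rw [e2] at c2
    linarith

/-- `x ↦ (1+x)^(-c) + (1-x)^(-c)` is monotone on `[0,1)` for `c ∈ [0,1]`. -/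
lemma gmono {c x y : ℝ} (hc0 : 0 ≤ c) (hc1 : c ≤ 1) (hx : 0 ≤ x) (hxy : x ≤ y) (hy : y < 1) :
    (1 + x) ^ (-c) + (1 - x) ^ (-c) ≤ (1 + y) ^ (-c) + (1 - y) ^ (-c) := by
  have h1x : (0:ℝ) < 1 + x := by linarith
  have h1y : (0:ℝ) < 1 + y := by linarith
  have h2x : (0:ℝ) < 1 - x := by linarith
  have h2y : (0:ℝ) < 1 - y := by linarith
  have hApos : 0 < (1 + x) ^ c := rpow_pos_of_pos h1x c
  have hBpos : 0 < (1 + y) ^ c := rpow_pos_of_pos h1y c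
  have hCpos : 0 < (1 - x) ^ c := rpow_pos_of_pos h2x c
  have hDpos : 0 < (1 - y) ^ c := rpow_pos_of_pos h2y c
  have hA1 : 1 ≤ (1 + x) ^ c := one_le_rpow (by linarith) hc0
  have hB1 : 1 ≤ (1 + y) ^ c := one_le_rpow (by linarith) hc0
  have hC1 : (1 - x) ^ c ≤ 1 := rpow_le_one h2x.le (by linarith) hc0
  have hD1 : (1 - y) ^ c ≤ 1 := rpow_le_one h2y.le (by linarith) hc0
  have hAB : (1 + x) ^ c ≤ (1 + y) ^ c := rpow_le_rpow h1x.le (by linarith) hc0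
  have hDC : (1 - y) ^ c ≤ (1 - x) ^ c := rpow_le_rpow h2y.le (by linarith) hc0
  have hsum : (1 + y) ^ c + (1 - y) ^ c ≤ (1 + x) ^ c + (1 - x) ^ c :=
    hdec hc0 hc1 hx hxy hy.le
  rw [rpow_neg h1x.le, rpow_neg h1y.le, rpow_neg h2x.le, rpow_neg h2y.le]
  set A := (1 + x) ^ c
  set B := (1 + y) ^ c
  set C := (1 - x) ^ c
  set D := (1 - y) ^ c
  have key1 : A⁻¹ - B⁻¹ = (B - A) / (A * B) := by field_simp
  have key2 : D⁻¹ - C⁻¹ = (C - D) / (C * D) := by field_simp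
  have k1 : (B - A) / (A * B) ≤ B - A :=
    div_le_self (by linarith) (one_le_mul_of_one_le_of_one_le hA1 hB1)
  have k2 : C - D ≤ (C - D) / (C * D) := by
    apply le_div_self (by linarith) (by positivity)
    calc C * D ≤ 1 * D := by nlinarith
    _ ≤ 1 := by simpa using hD1
  linarith

/-- monotonicity in the exponent. -/
lemma gcmono {c c' r : ℝ} (hc' : 0 ≤ c') (hcc : c' ≤ c) (hc1 : c ≤ 1) (hr : 0 ≤ r)
    (hr1 : r < 1) :
    (1 + r) ^ (-c') + (1 - r) ^ (-c') ≤ (1 + r) ^ (-c) + (1 - r) ^ (-c) := by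
  have h1 : (0:ℝ) < 1 + r := by linarith
  have h2 : (0:ℝ) < 1 - r := by linarith
  set d := c - c' with hd
  have hd0 : 0 ≤ d := by linarith
  have hd1 : d ≤ 1 := by linarith
  have hU : (1 + r) ^ (-c') = (1 + r) ^ (-c) * (1 + r) ^ d := by
    rw [← rpow_add h1, hd]; ring_nf
  have hV : (1 - r) ^ (-c') = (1 - r) ^ (-c) * (1 - r) ^ d := by
    rw [← rpow_add h2, hd]; ring_nf
  have hUc : (1 + r) ^ (-c) ≤ 1 := rpow_le_one_of_one_le_of_nonpos (by linarith) (by linarith)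
  have hVc : 1 ≤ (1 - r) ^ (-c) :=
    one_le_rpow_of_pos_of_le_one_of_nonpos h2 (by linarith) (by linarith)
  have hUd : 1 ≤ (1 + r) ^ d := one_le_rpow (by linarith) hd0
  have hVd : (1 - r) ^ d ≤ 1 := rpow_le_one h2.le (by linarith) hd0
  have hsum : (1 + r) ^ d + (1 - r) ^ d ≤ 2 := by
    have := hdec hd0 hd1 (le_refl 0) hr hr1.le
    simp only [add_zero, sub_zero, Real.one_rpow] at this
    linarith
  have hUpos : 0 < (1 + r) ^ (-c) := rpow_pos_of_pos h1 _
  have hVpos : 0 < (1 - r) ^ (-c) := rpow_pos_of_pos h2 _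
  rw [hU, hV]
  nlinarith [mul_le_mul_of_nonneg_left hsum hVpos.le]

/-- Core pointwise second-derivative comparison. -/
lemma D1 {p P ρ r : ℝ} (hp : 1 < p) (hpP : p ≤ P) (hP2 : P ≤ 2) (hρ0 : 0 ≤ ρ) (hρ1 : ρ ≤ 1)
    (hr : 0 ≤ r) (hr1 : r < 1) :
    (1 + ρ * r) ^ (P - 2) + (1 - ρ * r) ^ (P - 2)
      ≤ (1 + r) ^ (p - 2) + (1 - r) ^ (p - 2) := by
  have h1 : P - 2 = -(2 - P) := by ring
  have h2 : p - 2 = -(2 - p) := by ring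
  rw [h1, h2]
  have hρr : ρ * r ≤ r := by nlinarith
  have hρr0 : 0 ≤ ρ * r := by positivity
  calc (1 + ρ*r) ^ (-(2 - P)) + (1 - ρ*r) ^ (-(2 - P))
      ≤ (1 + r) ^ (-(2 - P)) + (1 - r) ^ (-(2 - P)) :=
        gmono (by linarith) (by linarith) hρr0 hρr hr1
    _ ≤ (1 + r) ^ (-(2 - p)) + (1 - r) ^ (-(2 - p)) :=
        gcmono (by linarith) (by linarith) (by linarith) hr hr1

end Stmt12

namespace Stmt12

noncomputable def E (r t : ℝ) : ℝ := ((1 + t) ^ r + (1 - t) ^ r) / 2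

lemma hasDerivAt_onePlus (r t : ℝ) (h : (1:ℝ) + t ≠ 0 ∨ 1 ≤ r) :
    HasDerivAt (fun s => (1 + s) ^ r) (r * (1 + t) ^ (r - 1)) t := by
  have h1 : HasDerivAt (fun s : ℝ => 1 + s) 1 t := (hasDerivAt_id t).const_add 1
  have h2 := (Real.hasDerivAt_rpow_const (x := 1 + t) (p := r) h).comp t h1
  simpa [Function.comp_def] using h2

lemma hasDerivAt_oneMinus (r t : ℝ) (h : (1:ℝ) - t ≠ 0 ∨ 1 ≤ r) :
    HasDerivAt (fun s => (1 - s) ^ r) (-(r * (1 - t) ^ (r - 1))) t := by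
  have h1 : HasDerivAt (fun s : ℝ => 1 - s) (-1) t := (hasDerivAt_id t).const_sub 1
  have h2 := (Real.hasDerivAt_rpow_const (x := 1 - t) (p := r) h).comp t h1
  simpa [Function.comp_def] using h2

lemma hasDerivAt_E (r t : ℝ) (h : ((1:ℝ) + t ≠ 0 ∧ (1:ℝ) - t ≠ 0) ∨ 1 ≤ r) :
    HasDerivAt (E r) (r * ((1 + t) ^ (r - 1) - (1 - t) ^ (r - 1)) / 2) t := by
  have h1 : HasDerivAt (fun s => (1 + s) ^ r) (r * (1 + t) ^ (r - 1)) t :=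
    hasDerivAt_onePlus r t (h.imp And.left id)
  have h2 : HasDerivAt (fun s => (1 - s) ^ r) (-(r * (1 - t) ^ (r - 1))) t :=
    hasDerivAt_oneMinus r t (h.imp And.right id)
  have := (h1.add h2).div_const 2
  refine this.congr_deriv (Eq.symm ?_)
  ring

lemma continuous_E {r : ℝ} (hr : 0 ≤ r) : Continuous (E r) := by
  unfold E
  apply Continuous.div_const
  apply Continuous.add
  · exact Real.continuous_rpow_const hr |>.comp (continuous_const.add continuous_id)
  · exact Real.continuous_rpow_const hr |>.comp (continuous_const.sub continuous_id)

end Stmt12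

namespace Stmt12

lemma G_nonneg {p P ρ : ℝ} (hp : 1 < p) (hpP : p ≤ P) (hP2 : P ≤ 2) (hρ0 : 0 < ρ)
    (hρ1 : ρ ≤ 1) (hrel : p - 1 = ρ ^ 2 * (P - 1)) {t : ℝ} (ht0 : 0 ≤ t) (ht1 : t < 1) :
    ρ * ((1 + ρ * t) ^ (P - 1) - (1 - ρ * t) ^ (P - 1))
      ≤ (1 + t) ^ (p - 1) - (1 - t) ^ (p - 1) := by
  set G : ℝ → ℝ := fun s =>
    ((1 + s) ^ (p - 1) - (1 - s) ^ (p - 1)) - ρ * ((1 + ρ * s) ^ (P - 1) - (1 - ρ * s) ^ (P - 1))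
    with hG
  have hp1 : (0:ℝ) ≤ p - 1 := by linarith
  have hP1 : (0:ℝ) ≤ P - 1 := by linarith
  have contG : ContinuousOn G (Ico (0:ℝ) 1) := by
    apply Continuous.continuousOn
    have c1 : Continuous fun s : ℝ => (1 + s) ^ (p - 1) :=
      (Real.continuous_rpow_const hp1).comp (continuous_const.add continuous_id)
    have c2 : Continuous fun s : ℝ => (1 - s) ^ (p - 1) :=
      (Real.continuous_rpow_const hp1).comp (continuous_const.sub continuous_id)
    have c3 : Continuous fun s : ℝ => (1 + ρ * s) ^ (P - 1) :=
      (Real.continuous_rpow_const hP1).comp (continuous_const.add (continuous_const.mul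
        continuous_id))
    have c4 : Continuous fun s : ℝ => (1 - ρ * s) ^ (P - 1) :=
      (Real.continuous_rpow_const hP1).comp (continuous_const.sub (continuous_const.mul
        continuous_id))
    exact (c1.sub c2).sub (continuous_const.mul (c3.sub c4))
  have hasD : ∀ s ∈ Ioo (0:ℝ) 1, HasDerivAt G
      ((p - 1) * ((1 + s) ^ (p - 2) + (1 - s) ^ (p - 2)
        - ((1 + ρ * s) ^ (P - 2) + (1 - ρ * s) ^ (P - 2)))) s := by
    intro s hs
    obtain ⟨hs0, hs1⟩ := hs
    have h1s : (1:ℝ) + s ≠ 0 := by positivity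
    have h2s : (1:ℝ) - s ≠ 0 := by
      have : (0:ℝ) < 1 - s := by linarith
      positivity
    have hρs0 : 0 ≤ ρ * s := by positivity
    have hρs1 : ρ * s < 1 := by nlinarith
    have h3s : (1:ℝ) + ρ * s ≠ 0 := by positivity
    have h4s : (1:ℝ) - ρ * s ≠ 0 := by
      have : (0:ℝ) < 1 - ρ * s := by linarith
      positivity
    have d1 := hasDerivAt_onePlus (p - 1) s (Or.inl h1s)
    have d2 := hasDerivAt_oneMinus (p - 1) s (Or.inl h2s)
    have d3 := (hasDerivAt_onePlus (P - 1) (ρ * s) (Or.inl h3s)).comp s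
      ((hasDerivAt_id s).const_mul ρ)
    have d4 := (hasDerivAt_oneMinus (P - 1) (ρ * s) (Or.inl h4s)).comp s
      ((hasDerivAt_id s).const_mul ρ)
    simp only [mul_one] at d3 d4
    have total := (d1.sub d2).sub (((d3.sub d4)).const_mul ρ)
    refine total.congr_deriv (Eq.symm ?_)
    have e1 : p - 1 - 1 = p - 2 := by ring
    have e2 : P - 1 - 1 = P - 2 := by ring
    rw [e1, e2]
    have : ρ * ((P - 1) * (1 + ρ * s) ^ (P - 2) * ρ - -((P - 1) * (1 - ρ * s) ^ (P - 2)) * ρ)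
        = (p - 1) * ((1 + ρ * s) ^ (P - 2) + (1 - ρ * s) ^ (P - 2)) := by
      rw [hrel]; ring
    rw [Function.comp_def, Function.comp_def] at *
    nlinarith [this]
  have monoG : MonotoneOn G (Ico (0:ℝ) 1) := by
    apply monotoneOn_of_deriv_nonneg (convex_Ico 0 1) contG
    · intro s hs
      rw [interior_Ico] at hs
      exact (hasD s hs).differentiableAt.differentiableWithinAt
    · intro s hs
      rw [interior_Ico] at hs
      rw [(hasD s hs).deriv]
      have hd1 := D1 hp hpP hP2 hρ0.le hρ1 hs.1.le hs.2
      have : (0:ℝ) ≤ p - 1 := by linarith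
      nlinarith [hd1]
  have hG0 : G 0 = 0 := by
    simp [hG, Real.one_rpow]
  have := monoG (show (0:ℝ) ∈ Ico (0:ℝ) 1 by constructor <;> norm_num)
    (show t ∈ Ico (0:ℝ) 1 from ⟨ht0, ht1⟩) ht0
  rw [hG0] at this
  simp only [hG] at this
  linarith

lemma step2 {p P ρ : ℝ} (hp : 1 < p) (hpP : p ≤ P) (hP2 : P ≤ 2) (hρ0 : 0 < ρ)
    (hρ1 : ρ ≤ 1) (hrel : p - 1 = ρ ^ 2 * (P - 1)) {t : ℝ} (ht0 : 0 ≤ t) (ht1 : t ≤ 1) :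
    E P (ρ * t) ≤ 1 + (P / p) * (E p t - 1) := by
  have hppos : (0:ℝ) < p := by linarith
  have hPpos : (0:ℝ) < P := by linarith
  set F : ℝ → ℝ := fun s => 1 + (P / p) * (E p s - 1) - E P (ρ * s) with hF
  have contF : ContinuousOn F (Icc (0:ℝ) 1) := by
    apply Continuous.continuousOn
    exact (continuous_const.add (continuous_const.mul ((continuous_E hppos.le).sub
      continuous_const))).sub ((continuous_E hPpos.le).comp (continuous_const.mul continuous_id))
  have hasD : ∀ s ∈ Ioo (0:ℝ) 1, HasDerivAt F
      ((P / 2) * (((1 + s) ^ (p - 1) - (1 - s) ^ (p - 1))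
        - ρ * ((1 + ρ * s) ^ (P - 1) - (1 - ρ * s) ^ (P - 1)))) s := by
    intro s hs
    have d1 := hasDerivAt_E p s (Or.inr hp.le)
    have d2 := (hasDerivAt_E P (ρ * s) (Or.inr (by linarith))).comp s
      ((hasDerivAt_id s).const_mul ρ)
    simp only [mul_one] at d2
    have total := ((d1.sub_const 1).const_mul (P / p)).const_add 1 |>.sub d2
    refine total.congr_deriv (Eq.symm ?_)
    rw [Function.comp_def] at *
    field_simp
  have monoF : MonotoneOn F (Icc (0:ℝ) 1) := by
    apply monotoneOn_of_deriv_nonneg (convex_Icc 0 1) contF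
    · intro s hs
      rw [interior_Icc] at hs
      exact (hasD s hs).differentiableAt.differentiableWithinAt
    · intro s hs
      rw [interior_Icc] at hs
      rw [(hasD s hs).deriv]
      have := G_nonneg hp hpP hP2 hρ0 hρ1 hrel hs.1.le hs.2
      nlinarith [this]
  have hF0 : F 0 = 0 := by
    simp [hF, E, Real.one_rpow]
  have := monoF (show (0:ℝ) ∈ Icc (0:ℝ) 1 by constructor <;> norm_num)
    (show t ∈ Icc (0:ℝ) 1 from ⟨ht0, ht1⟩) ht0
  rw [hF0] at this
  simp only [hF] at this
  linarith

lemma E_nonneg {r t : ℝ} (ht0 : -1 ≤ t) (ht1 : t ≤ 1) : 0 ≤ E r t := by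
  have h1 : (0:ℝ) ≤ 1 + t := by linarith
  have h2 : (0:ℝ) ≤ 1 - t := by linarith
  have := Real.rpow_nonneg h1 r
  have := Real.rpow_nonneg h2 r
  unfold E; positivity

lemma one_le_E {r t : ℝ} (hr : 1 ≤ r) (ht0 : -1 ≤ t) (ht1 : t ≤ 1) : 1 ≤ E r t := by
  have b1 := one_add_mul_self_le_rpow_one_add (s := t) (by linarith) hr
  have b2 := one_add_mul_self_le_rpow_one_add (s := -t) (by linarith) hr
  rw [show (1:ℝ) + -t = 1 - t by ring] at b2
  unfold E
  nlinarith [b1, b2]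

lemma H2 {p P ρ : ℝ} (hp : 1 < p) (hpP : p ≤ P) (hP2 : P ≤ 2) (hρ0 : 0 < ρ)
    (hρ1 : ρ ≤ 1) (hrel : p - 1 = ρ ^ 2 * (P - 1)) {t : ℝ} (ht0 : 0 ≤ t) (ht1 : t ≤ 1) :
    (E P (ρ * t)) ^ (1 / P) ≤ (E p t) ^ (1 / p) := by
  have hppos : (0:ℝ) < p := by linarith
  have hPpos : (0:ℝ) < P := by linarith
  have hE1 : 1 ≤ E p t := one_le_E hp.le (by linarith) ht1
  have hBern : 1 + (P / p) * (E p t - 1) ≤ (E p t) ^ (P / p) := by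
    have := one_add_mul_self_le_rpow_one_add (s := E p t - 1) (by linarith)
      (p := P / p) ((one_le_div hppos).2 hpP)
    rw [show (1:ℝ) + (E p t - 1) = E p t by ring] at this
    linarith
  have chain : E P (ρ * t) ≤ (E p t) ^ (P / p) :=
    (step2 hp hpP hP2 hρ0 hρ1 hrel ht0 ht1).trans hBern
  have hEPnn : 0 ≤ E P (ρ * t) := by
    apply E_nonneg (by nlinarith) (by nlinarith)
  calc (E P (ρ * t)) ^ (1 / P) ≤ ((E p t) ^ (P / p)) ^ (1 / P) :=
        Real.rpow_le_rpow hEPnn chain (by positivity)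
    _ = (E p t) ^ (1 / p) := by
        rw [← Real.rpow_mul (by linarith)]
        congr 1
        field_simp
end Stmt12

namespace Stmt12

lemma holder2 {P Q : ℝ} (hPQ : Real.HolderConjugate P Q) {a1 a2 b1 b2 : ℝ}
    (ha1 : 0 ≤ a1) (ha2 : 0 ≤ a2) (hb1 : 0 ≤ b1) (hb2 : 0 ≤ b2) :
    (a1 * b1 + a2 * b2) / 2 ≤ ((a1 ^ P + a2 ^ P) / 2) ^ (1 / P) * ((b1 ^ Q + b2 ^ Q) / 2) ^ (1 / Q) := by
  have hwnn : (0:ℝ) ≤ 2⁻¹ := by norm_num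
  set u : ℝ := (2:ℝ)⁻¹ ^ (1 / P) with hu
  set w : ℝ := (2:ℝ)⁻¹ ^ (1 / Q) with hw
  have hun : 0 ≤ u := Real.rpow_nonneg hwnn _
  have hwn : 0 ≤ w := Real.rpow_nonneg hwnn _
  have huP : u ^ P = 2⁻¹ := by
    rw [hu, ← Real.rpow_mul hwnn, one_div_mul_cancel hPQ.ne_zero, Real.rpow_one]
  have hwQ : w ^ Q = 2⁻¹ := by
    rw [hw, ← Real.rpow_mul hwnn, one_div_mul_cancel hPQ.symm.ne_zero, Real.rpow_one]
  have huw : u * w = 2⁻¹ := by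
    rw [hu, hw, ← Real.rpow_add (by norm_num : (0:ℝ) < 2⁻¹)]
    rw [show 1 / P + 1 / Q = P⁻¹ + Q⁻¹ by rw [one_div, one_div], (Real.holderConjugate_iff.1 hPQ).2,
      Real.rpow_one]
  have key := Real.inner_le_Lp_mul_Lq_of_nonneg (Finset.univ (α := Fin 2))
      (f := ![a1 * u, a2 * u]) (g := ![b1 * w, b2 * w]) hPQ
      (by intro i _; fin_cases i <;> dsimp <;> positivity)
      (by intro i _; fin_cases i <;> dsimp <;> positivity)
  rw [Fin.sum_univ_two, Fin.sum_univ_two, Fin.sum_univ_two] at key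
  simp only [Matrix.cons_val_zero, Matrix.cons_val_one, Matrix.head_cons] at key
  have el : a1 * u * (b1 * w) + a2 * u * (b2 * w) = (a1 * b1 + a2 * b2) / 2 := by
    have : a1 * u * (b1 * w) + a2 * u * (b2 * w) = (a1 * b1 + a2 * b2) * (u * w) := by ring
    rw [this, huw]; ring
  have ef : (a1 * u) ^ P + (a2 * u) ^ P = (a1 ^ P + a2 ^ P) / 2 := by
    rw [Real.mul_rpow ha1 hun, Real.mul_rpow ha2 hun, huP]; ring
  have eg : (b1 * w) ^ Q + (b2 * w) ^ Q = (b1 ^ Q + b2 ^ Q) / 2 := by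
    rw [Real.mul_rpow hb1 hwn, Real.mul_rpow hb2 hwn, hwQ]; ring
  rw [el, ef, eg] at key
  exact key

lemma caseB {p q σ : ℝ} (hp : 1 < p) (hq : 1 < q) (hσ0 : 0 < σ) (hσ1 : σ < 1)
    (hpq : (p - 1) * (q - 1) = σ ^ 2) (hq2 : 2 ≤ q) {u v : ℝ} (hu0 : 0 ≤ u) (hu1 : u ≤ 1)
    (hv0 : 0 ≤ v) (hv1 : v ≤ 1) :
    1 + σ * u * v ≤ (E p u) ^ (1 / p) * (E q v) ^ (1 / q) := by
  have hq1 : (0:ℝ) < q - 1 := by linarith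
  set Q' : ℝ := q / (q - 1) with hQ'
  have hconj : Real.HolderConjugate Q' q := by
    rw [Real.holderConjugate_iff]; constructor
    · rw [hQ', lt_div_iff₀ hq1]; linarith
    · rw [hQ']; field_simp; ring
  have hQ'1 : Q' - 1 = 1 / (q - 1) := by rw [hQ']; field_simp; ring
  have hσu1 : σ * u ≤ 1 := by nlinarith
  have hσu0 : 0 ≤ σ * u := by positivity
  have h1 := holder2 hconj (a1 := 1 + σ * u) (a2 := 1 - σ * u) (b1 := 1 + v) (b2 := 1 - v)
    (by linarith) (by linarith) (by linarith) (by linarith)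
  have el : ((1 + σ * u) * (1 + v) + (1 - σ * u) * (1 - v)) / 2 = 1 + σ * u * v := by ring
  rw [el] at h1
  have hpQle : p ≤ Q' := by
    have : p - 1 ≤ Q' - 1 := by
      rw [hQ'1, le_div_iff₀ hq1]; nlinarith
    linarith
  have hQ'2 : Q' ≤ 2 := by
    have : Q' - 1 ≤ 1 := by rw [hQ'1, div_le_one hq1]; linarith
    linarith
  have hrel : p - 1 = σ ^ 2 * (Q' - 1) := by
    rw [hQ'1]; field_simp; linarith [hpq]
  have h2 := H2 hp hpQle hQ'2 hσ0 hσ1.le hrel hu0 hu1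
  have hEq : 0 ≤ (E q v) ^ (1 / q) := Real.rpow_nonneg (E_nonneg (by linarith) hv1) _
  calc 1 + σ * u * v ≤ (E Q' (σ * u)) ^ (1 / Q') * (E q v) ^ (1 / q) := by
        unfold E; exact h1
    _ ≤ (E p u) ^ (1 / p) * (E q v) ^ (1 / q) := mul_le_mul_of_nonneg_right h2 hEq

lemma E_two (t : ℝ) : E 2 t = 1 + t ^ 2 := by
  unfold E
  rw [show (2:ℝ) = ((2:ℕ):ℝ) by norm_num, Real.rpow_natCast, Real.rpow_natCast]
  ring

lemma caseA {p q σ : ℝ} (hp : 1 < p) (hq : 1 < q) (hσ0 : 0 < σ) (hσ1 : σ < 1)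
    (hpq : (p - 1) * (q - 1) = σ ^ 2) (hp2 : p ≤ 2) (hq2 : q ≤ 2) {u v : ℝ} (hu0 : 0 ≤ u)
    (hu1 : u ≤ 1) (hv0 : 0 ≤ v) (hv1 : v ≤ 1) :
    1 + σ * u * v ≤ (E p u) ^ (1 / p) * (E q v) ^ (1 / q) := by
  set a : ℝ := Real.sqrt (p - 1) with hadef
  set b : ℝ := Real.sqrt (q - 1) with hbdef
  have ha2 : a ^ 2 = p - 1 := Real.sq_sqrt (by linarith)
  have hb2 : b ^ 2 = q - 1 := Real.sq_sqrt (by linarith)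
  have ha0 : 0 < a := Real.sqrt_pos.2 (by linarith)
  have hb0 : 0 < b := Real.sqrt_pos.2 (by linarith)
  have ha1 : a ≤ 1 := by nlinarith
  have hb1 : b ≤ 1 := by nlinarith
  have hab : a * b = σ := by
    rw [hadef, hbdef, ← Real.sqrt_mul (by linarith), hpq, Real.sqrt_sq hσ0.le]
  have key1 : 1 + σ * u * v ≤ Real.sqrt ((1 + (p-1) * u^2) * (1 + (q-1) * v^2)) := by
    rw [show (1:ℝ) + σ * u * v = Real.sqrt ((1 + σ*u*v)^2) from
      (Real.sqrt_sq (by nlinarith [mul_nonneg (mul_nonneg hσ0.le hu0) hv0])).symm]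
    apply Real.sqrt_le_sqrt
    have expand : (1 + (p-1)*u^2) * (1 + (q-1)*v^2) - (1 + σ*u*v)^2 = (a*u - b*v)^2 := by
      rw [← ha2, ← hb2, ← hab]; ring
    nlinarith [sq_nonneg (a*u - b*v), expand]
  have sqsplit : Real.sqrt ((1 + (p-1) * u^2) * (1 + (q-1) * v^2))
      = Real.sqrt (1 + (p-1) * u^2) * Real.sqrt (1 + (q-1) * v^2) :=
    Real.sqrt_mul (by nlinarith) _
  have hEu : Real.sqrt (1 + (p-1) * u^2) = (E 2 (a * u)) ^ (1/(2:ℝ)) := by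
    rw [E_two, ← Real.sqrt_eq_rpow, mul_pow, ha2]
  have hEv : Real.sqrt (1 + (q-1) * v^2) = (E 2 (b * v)) ^ (1/(2:ℝ)) := by
    rw [E_two, ← Real.sqrt_eq_rpow, mul_pow, hb2]
  have h2u := H2 hp hp2 (le_refl 2) ha0 ha1 (by rw [ha2]; ring) hu0 hu1
  have h2v := H2 hq hq2 (le_refl 2) hb0 hb1 (by rw [hb2]; ring) hv0 hv1
  have hEunn : 0 ≤ (E 2 (b * v)) ^ (1/(2:ℝ)) :=
    Real.rpow_nonneg (E_nonneg (by nlinarith) (by nlinarith)) _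
  have hEpnn : 0 ≤ (E p u) ^ (1 / p) := Real.rpow_nonneg (E_nonneg (by linarith) hu1) _
  calc 1 + σ * u * v ≤ Real.sqrt ((1 + (p-1) * u^2) * (1 + (q-1) * v^2)) := key1
    _ = (E 2 (a * u)) ^ (1/(2:ℝ)) * (E 2 (b * v)) ^ (1/(2:ℝ)) := by
        rw [sqsplit, hEu, hEv]
    _ ≤ (E p u) ^ (1 / p) * (E 2 (b * v)) ^ (1/(2:ℝ)) :=
        mul_le_mul_of_nonneg_right h2u hEunn
    _ ≤ (E p u) ^ (1 / p) * (E q v) ^ (1 / q) :=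
        mul_le_mul_of_nonneg_left h2v hEpnn

lemma corePoint {p q σ : ℝ} (hp : 1 < p) (hq : 1 < q) (hσ0 : 0 < σ) (hσ1 : σ < 1)
    (hpq : (p - 1) * (q - 1) = σ ^ 2) {u v : ℝ} (hu0 : 0 ≤ u) (hu1 : u ≤ 1)
    (hv0 : 0 ≤ v) (hv1 : v ≤ 1) :
    1 + σ * u * v ≤ (E p u) ^ (1 / p) * (E q v) ^ (1 / q) := by
  rcases le_or_gt q 2 with hq2 | hq2
  · rcases le_or_gt p 2 with hp2 | hp2
    · exact caseA hp hq hσ0 hσ1 hpq hp2 hq2 hu0 hu1 hv0 hv1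
    · have := caseB hq hp hσ0 hσ1 (by rw [mul_comm]; exact hpq) hp2.le hv0 hv1 hu0 hu1
      calc 1 + σ * u * v = 1 + σ * v * u := by ring
        _ ≤ (E q v) ^ (1 / q) * (E p u) ^ (1 / p) := this
        _ = (E p u) ^ (1 / p) * (E q v) ^ (1 / q) := by ring
  · exact caseB hp hq hσ0 hσ1 hpq hq2.le hu0 hu1 hv0 hv1

lemma E_abs (r u : ℝ) : E r |u| = E r u := by
  rcases abs_cases u with ⟨h, _⟩ | ⟨h, _⟩
  · rw [h]
  · rw [h]; unfold E
    rw [show (1:ℝ) + -u = 1 - u by ring, show (1:ℝ) - -u = 1 + u by ring]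
    ring

lemma twoPoint {p q σ : ℝ} (hp : 1 < p) (hq : 1 < q) (hσ0 : 0 < σ) (hσ1 : σ < 1)
    (hpq : (p - 1) * (q - 1) = σ ^ 2) {a b c e : ℝ} (ha : 0 ≤ a) (hb : 0 ≤ b) (hc : 0 ≤ c)
    (he : 0 ≤ e) :
    ((1 + σ) * (a * c + b * e) + (1 - σ) * (a * e + b * c)) / 4
      ≤ ((a ^ p + b ^ p) / 2) ^ (1 / p) * ((c ^ q + e ^ q) / 2) ^ (1 / q) := by
  have hppos : (0:ℝ) < p := by linarith
  have hqpos : (0:ℝ) < q := by linarith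
  have hRnn : 0 ≤ ((a ^ p + b ^ p) / 2) ^ (1 / p) * ((c ^ q + e ^ q) / 2) ^ (1 / q) := by
    have h1 : 0 ≤ a ^ p := Real.rpow_nonneg ha p
    have h2 : 0 ≤ b ^ p := Real.rpow_nonneg hb p
    have h3 : 0 ≤ c ^ q := Real.rpow_nonneg hc q
    have h4 : 0 ≤ e ^ q := Real.rpow_nonneg he q
    have := Real.rpow_nonneg (show (0:ℝ) ≤ (a ^ p + b ^ p) / 2 by linarith) (1/p)
    have := Real.rpow_nonneg (show (0:ℝ) ≤ (c ^ q + e ^ q) / 2 by linarith) (1/q)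
    nlinarith
  rcases eq_or_lt_of_le (by linarith : (0:ℝ) ≤ a + b) with hab0 | hab0
  · have ha0 : a = 0 := by linarith
    have hb0 : b = 0 := by linarith
    have h0 : ((1 + σ) * (a * c + b * e) + (1 - σ) * (a * e + b * c)) / 4 = 0 := by
      rw [ha0, hb0]; ring
    rw [h0]; exact hRnn
  rcases eq_or_lt_of_le (by linarith : (0:ℝ) ≤ c + e) with hce0 | hce0
  · have hc0 : c = 0 := by linarith
    have he0 : e = 0 := by linarith
    have h0 : ((1 + σ) * (a * c + b * e) + (1 - σ) * (a * e + b * c)) / 4 = 0 := by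
      rw [hc0, he0]; ring
    rw [h0]; exact hRnn
  set A : ℝ := (a + b) / 2 with hA
  set C : ℝ := (c + e) / 2 with hC
  set u : ℝ := (a - b) / (a + b) with hu
  set v : ℝ := (c - e) / (c + e) with hv
  have hApos : 0 < A := by rw [hA]; linarith
  have hCpos : 0 < C := by rw [hC]; linarith
  have hu1 : |u| ≤ 1 := by
    rw [hu, abs_div, abs_of_pos hab0, div_le_one hab0]
    rw [abs_le]; constructor <;> linarith
  have hv1 : |v| ≤ 1 := by
    rw [hv, abs_div, abs_of_pos hce0, div_le_one hce0]
    rw [abs_le]; constructor <;> linarith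
  have hu1' : -1 ≤ u ∧ u ≤ 1 := abs_le.1 hu1
  have hv1' : -1 ≤ v ∧ v ≤ 1 := abs_le.1 hv1
  have ea : a = A * (1 + u) := by rw [hA, hu]; field_simp; ring
  have eb : b = A * (1 - u) := by rw [hA, hu]; field_simp; ring
  have ec : c = C * (1 + v) := by rw [hC, hv]; field_simp; ring
  have ee : e = C * (1 - v) := by rw [hC, hv]; field_simp; ring
  have eLHS : ((1 + σ) * (a * c + b * e) + (1 - σ) * (a * e + b * c)) / 4
      = A * C * (1 + σ * u * v) := by
    rw [ea, eb, ec, ee]; ring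
  have h1u : (0:ℝ) ≤ 1 + u := by linarith [hu1'.1]
  have h2u : (0:ℝ) ≤ 1 - u := by linarith [hu1'.2]
  have h1v : (0:ℝ) ≤ 1 + v := by linarith [hv1'.1]
  have h2v : (0:ℝ) ≤ 1 - v := by linarith [hv1'.2]
  have eRp : (a ^ p + b ^ p) / 2 = A ^ p * E p u := by
    rw [ea, eb, Real.mul_rpow hApos.le h1u, Real.mul_rpow hApos.le h2u]
    unfold E; ring
  have eRq : (c ^ q + e ^ q) / 2 = C ^ q * E q v := by
    rw [ec, ee, Real.mul_rpow hCpos.le h1v, Real.mul_rpow hCpos.le h2v]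
    unfold E; ring
  have hEp : 0 ≤ E p u := E_nonneg hu1'.1 hu1'.2
  have hEq : 0 ≤ E q v := E_nonneg hv1'.1 hv1'.2
  have eRp' : ((a ^ p + b ^ p) / 2) ^ (1 / p) = A * (E p u) ^ (1 / p) := by
    rw [eRp, Real.mul_rpow (Real.rpow_nonneg hApos.le p) hEp,
      ← Real.rpow_mul hApos.le, mul_one_div_cancel hppos.ne', Real.rpow_one]
  have eRq' : ((c ^ q + e ^ q) / 2) ^ (1 / q) = C * (E q v) ^ (1 / q) := by
    rw [eRq, Real.mul_rpow (Real.rpow_nonneg hCpos.le q) hEq,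
      ← Real.rpow_mul hCpos.le, mul_one_div_cancel hqpos.ne', Real.rpow_one]
  clear_value A C u v
  clear hu hv hA hC ea eb ec ee eRp eRq
  have core : 1 + σ * u * v ≤ (E p u) ^ (1 / p) * (E q v) ^ (1 / q) := by
    have habs : 1 + σ * u * v ≤ 1 + σ * |u| * |v| := by
      have huv : u * v ≤ |u| * |v| := by
        calc u * v ≤ |u * v| := le_abs_self _
          _ = |u| * |v| := abs_mul u v
      have hmul := mul_le_mul_of_nonneg_left huv hσ0.le
      linarith [hmul]
    have hcp := corePoint hp hq hσ0 hσ1 hpq (abs_nonneg u) hu1 (abs_nonneg v) hv1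
    rw [E_abs, E_abs] at hcp
    exact habs.trans hcp
  rw [eLHS, eRp', eRq']
  calc A * C * (1 + σ * u * v) ≤ A * C * ((E p u) ^ (1 / p) * (E q v) ^ (1 / q)) := by
        apply mul_le_mul_of_nonneg_left core (by positivity)
    _ = A * (E p u) ^ (1 / p) * (C * (E q v) ^ (1 / q)) := by ring

end Stmt12

namespace Stmt12

lemma sumCons {d : ℕ} (h : (Fin (d + 1) → Bool) → ℝ) :
    ∑ x : Fin (d + 1) → Bool, h x
      = ∑ b : Bool, ∑ x' : Fin d → Bool, h (Fin.cons b x') := by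
  rw [← (Fin.consEquiv (fun _ : Fin (d + 1) => Bool)).sum_comp h]
  rw [Fintype.sum_prod_type]
  rfl

lemma noiseW_cons (σ : ℝ) {d : ℕ} (c b : Bool) (y x : Fin d → Bool) :
    noiseW σ (Fin.cons c y) (Fin.cons b x)
      = (if c = b then (1 + σ) / 2 else (1 - σ) / 2) * noiseW σ y x := by
  unfold noiseW
  rw [Fin.prod_univ_succ]
  simp only [Fin.cons_zero, Fin.cons_succ]

lemma mainInd {σ p q : ℝ} (hp : 1 < p) (hq : 1 < q) (hσ0 : 0 < σ) (hσ1 : σ < 1)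
    (hpq : (p - 1) * (q - 1) = σ ^ 2) :
    ∀ (d : ℕ) (f g : (Fin d → Bool) → ℝ), (∀ x, 0 ≤ f x) → (∀ x, 0 ≤ g x) →
    (∑ x : Fin d → Bool, ∑ y : Fin d → Bool, noiseW σ y x * f y * g x) / 2 ^ d
      ≤ ((∑ y : Fin d → Bool, f y ^ p) / 2 ^ d) ^ (1 / p) *
        ((∑ x : Fin d → Bool, g x ^ q) / 2 ^ d) ^ (1 / q) := by
  have hppos : (0:ℝ) < p := by linarith
  have hqpos : (0:ℝ) < q := by linarith
  intro d
  induction d with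
  | zero =>
    intro f g hf hg
    simp only [pow_zero, div_one]
    rw [Finset.univ_unique, Finset.sum_singleton, Finset.sum_singleton,
      Finset.sum_singleton, Finset.sum_singleton]
    simp only [noiseW, Finset.univ_eq_empty, Finset.prod_empty, one_mul]
    rw [← Real.rpow_mul (hf _), ← Real.rpow_mul (hg _),
      mul_one_div_cancel hppos.ne', mul_one_div_cancel hqpos.ne',
      Real.rpow_one, Real.rpow_one]
  | succ d IH =>
    intro f g hf hg
    set w1 : Bool → Bool → ℝ := fun c b => if c = b then (1 + σ) / 2 else (1 - σ) / 2 with hw1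
    set I : Bool → Bool → ℝ := fun c b => ∑ x' : Fin d → Bool, ∑ y' : Fin d → Bool,
      noiseW σ y' x' * f (Fin.cons c y') * g (Fin.cons b x') with hI
    have LHSeq : (∑ x : Fin (d+1) → Bool, ∑ y : Fin (d+1) → Bool, noiseW σ y x * f y * g x)
        = ∑ b : Bool, ∑ c : Bool, w1 c b * I c b := by
      rw [sumCons (fun x => ∑ y : Fin (d+1) → Bool, noiseW σ y x * f y * g x)]
      apply Finset.sum_congr rfl; intro b _
      calc ∑ x' : Fin d → Bool, ∑ y : Fin (d+1) → Bool,
            noiseW σ y (Fin.cons b x') * f y * g (Fin.cons b x')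
          = ∑ x' : Fin d → Bool, ∑ c : Bool, ∑ y' : Fin d → Bool,
            w1 c b * (noiseW σ y' x' * f (Fin.cons c y') * g (Fin.cons b x')) := by
            apply Finset.sum_congr rfl; intro x' _
            rw [sumCons (fun y => noiseW σ y (Fin.cons b x') * f y * g (Fin.cons b x'))]
            apply Finset.sum_congr rfl; intro c _
            apply Finset.sum_congr rfl; intro y' _
            rw [noiseW_cons]; ring
        _ = ∑ c : Bool, w1 c b * I c b := by
            rw [Finset.sum_comm]
            apply Finset.sum_congr rfl; intro c _
            rw [hI]
            simp only [Finset.mul_sum]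
    set F : Bool → ℝ := fun b => ((∑ y' : Fin d → Bool, f (Fin.cons b y') ^ p) / 2 ^ d) ^ (1/p)
      with hF
    set G : Bool → ℝ := fun b => ((∑ x' : Fin d → Bool, g (Fin.cons b x') ^ q) / 2 ^ d) ^ (1/q)
      with hG
    have hFnn : ∀ b, 0 ≤ F b := fun b => Real.rpow_nonneg (by
      apply div_nonneg _ (by positivity)
      exact Finset.sum_nonneg fun y' _ => Real.rpow_nonneg (hf _) _) _
    have hGnn : ∀ b, 0 ≤ G b := fun b => Real.rpow_nonneg (by
      apply div_nonneg _ (by positivity)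
      exact Finset.sum_nonneg fun x' _ => Real.rpow_nonneg (hg _) _) _
    have hIle : ∀ c b : Bool, I c b / 2 ^ d ≤ F c * G b := fun c b =>
      IH (fun y' => f (Fin.cons c y')) (fun x' => g (Fin.cons b x')) (fun _ => hf _)
        (fun _ => hg _)
    have hpow : (0:ℝ) < 2 ^ d := by positivity
    have tp := twoPoint hp hq hσ0 hσ1 hpq (hFnn false) (hFnn true) (hGnn false) (hGnn true)
    have hFp : ∀ b, F b ^ p = (∑ y' : Fin d → Bool, f (Fin.cons b y') ^ p) / 2 ^ d := by
      intro b
      rw [hF, ← Real.rpow_mul, one_div_mul_cancel hppos.ne', Real.rpow_one]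
      apply div_nonneg _ (by positivity)
      exact Finset.sum_nonneg fun y' _ => Real.rpow_nonneg (hf _) _
    have hGq : ∀ b, G b ^ q = (∑ x' : Fin d → Bool, g (Fin.cons b x') ^ q) / 2 ^ d := by
      intro b
      rw [hG, ← Real.rpow_mul, one_div_mul_cancel hqpos.ne', Real.rpow_one]
      apply div_nonneg _ (by positivity)
      exact Finset.sum_nonneg fun x' _ => Real.rpow_nonneg (hg _) _
    have eF : (F false ^ p + F true ^ p) / 2 = (∑ y : Fin (d+1) → Bool, f y ^ p) / 2 ^ (d+1) := by
      rw [hFp, hFp, sumCons (fun y => f y ^ p), Fintype.sum_bool, pow_succ]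
      field_simp
      ring
    have eG : (G false ^ q + G true ^ q) / 2 = (∑ x : Fin (d+1) → Bool, g x ^ q) / 2 ^ (d+1) := by
      rw [hGq, hGq, sumCons (fun x => g x ^ q), Fintype.sum_bool, pow_succ]
      field_simp
      ring
    rw [LHSeq, ← eF, ← eG]
    have m1 := mul_le_mul_of_nonneg_left (hIle true true) (show (0:ℝ) ≤ (1+σ)/4 by linarith)
    have m2 := mul_le_mul_of_nonneg_left (hIle false false) (show (0:ℝ) ≤ (1+σ)/4 by linarith)
    have m3 := mul_le_mul_of_nonneg_left (hIle true false) (show (0:ℝ) ≤ (1-σ)/4 by linarith)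
    have m4 := mul_le_mul_of_nonneg_left (hIle false true) (show (0:ℝ) ≤ (1-σ)/4 by linarith)
    have expand : (∑ b : Bool, ∑ c : Bool, w1 c b * I c b) / 2 ^ (d+1)
        = (1+σ)/4 * (I true true / 2^d) + (1+σ)/4 * (I false false / 2^d)
          + (1-σ)/4 * (I true false / 2^d) + (1-σ)/4 * (I false true / 2^d) := by
      rw [Fintype.sum_bool, Fintype.sum_bool, Fintype.sum_bool]
      simp only [hw1, if_pos rfl, Bool.true_eq_false, Bool.false_eq_true, if_false, if_true,
        pow_succ]
      field_simp
      ring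
    rw [expand]
    calc (1+σ)/4 * (I true true / 2^d) + (1+σ)/4 * (I false false / 2^d)
          + (1-σ)/4 * (I true false / 2^d) + (1-σ)/4 * (I false true / 2^d)
        ≤ (1+σ)/4 * (F true * G true) + (1+σ)/4 * (F false * G false)
          + (1-σ)/4 * (F true * G false) + (1-σ)/4 * (F false * G true) := by
          linarith [m1, m2, m3, m4]
      _ = ((1 + σ) * (F false * G false + F true * G true)
            + (1 - σ) * (F false * G true + F true * G false)) / 4 := by ring
      _ ≤ _ := tp

end Stmt12

/-- Robust expansion lower bound for the hypercube: for every admissible pair `(A, B)`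
(`A` of measure at most `1/m`, and `Pr[x ∈ B ∣ y ∈ A] ≥ γ` where `x` is uniform and
`y ∼ N_σ(x)`), the ratio `μ(B)/μ(A)` is at least `γ^q · m^{1 + q/p - q}`. -/
theorem stmt12 (d : ℕ) (σ p q γ m : ℝ) (hσ0 : 0 < σ) (hσ1 : σ < 1)
    (hp : 1 ≤ p) (hq : 1 ≤ q) (hpq : (p - 1) * (q - 1) = σ ^ 2)
    (hγ0 : 0 ≤ γ) (hγ1 : γ ≤ 1) (hm : 1 ≤ m)
    (A B : Finset (Fin d → Bool)) (hA : A.Nonempty) (hB : B.Nonempty)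
    (hAsmall : (A.card : ℝ) / 2 ^ d ≤ 1 / m)
    (hcorr : γ ≤ (1 / ((A.card : ℝ) / 2 ^ d)) *
      hExp d (fun x => Tnoise σ (chi A) x * chi B x)) :
    γ ^ q * m ^ (1 + q / p - q)
      ≤ ((B.card : ℝ) / 2 ^ d) / ((A.card : ℝ) / 2 ^ d) := by
  have hσsq : 0 < σ ^ 2 := by positivity
  have hp1 : 1 < p := by
    rcases eq_or_lt_of_le hp with h | h
    · exfalso; rw [← h] at hpq; simp at hpq; nlinarith
    · exact h
  have hq1 : 1 < q := by
    rcases eq_or_lt_of_le hq with h | h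
    · exfalso; rw [← h] at hpq; simp at hpq; nlinarith
    · exact h
  have hppos : (0:ℝ) < p := by linarith
  have hqpos : (0:ℝ) < q := by linarith
  have hpow : (0:ℝ) < 2 ^ d := by positivity
  set μA : ℝ := (A.card : ℝ) / 2 ^ d with hμAdef
  set μB : ℝ := (B.card : ℝ) / 2 ^ d with hμBdef
  have hcardA : (0:ℝ) < A.card := by exact_mod_cast Finset.card_pos.2 hA
  have hcardB : (0:ℝ) < B.card := by exact_mod_cast Finset.card_pos.2 hB
  have hμA : 0 < μA := by rw [hμAdef]; positivity
  have hμB : 0 < μB := by rw [hμBdef]; positivity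
  -- the hypercontractive bound
  have sumA : ∑ y : Fin d → Bool, (chi A y) ^ p = (A.card : ℝ) := by
    calc ∑ y : Fin d → Bool, (chi A y) ^ p
        = ∑ y : Fin d → Bool, (if y ∈ A then (1:ℝ) else 0) := by
          apply Finset.sum_congr rfl; intro y _
          unfold chi
          split
          · exact Real.one_rpow p
          · exact Real.zero_rpow hppos.ne'
      _ = (A.card : ℝ) := by simp
  have sumB : ∑ x : Fin d → Bool, (chi B x) ^ q = (B.card : ℝ) := by
    calc ∑ x : Fin d → Bool, (chi B x) ^ q
        = ∑ x : Fin d → Bool, (if x ∈ B then (1:ℝ) else 0) := by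
          apply Finset.sum_congr rfl; intro x _
          unfold chi
          split
          · exact Real.one_rpow q
          · exact Real.zero_rpow hqpos.ne'
      _ = (B.card : ℝ) := by simp
  have hchiA : ∀ x, 0 ≤ chi A x := by intro x; unfold chi; split <;> norm_num
  have hchiB : ∀ x, 0 ≤ chi B x := by intro x; unfold chi; split <;> norm_num
  have hI : hExp d (fun x => Tnoise σ (chi A) x * chi B x)
      ≤ μA ^ (1/p) * μB ^ (1/q) := by
    have hexpand : hExp d (fun x => Tnoise σ (chi A) x * chi B x)
        = (∑ x : Fin d → Bool, ∑ y : Fin d → Bool, noiseW σ y x * chi A y * chi B x) / 2 ^ d := by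
      unfold hExp Tnoise
      congr 1
      apply Finset.sum_congr rfl; intro x _
      simp only []
      rw [Finset.sum_mul]
    rw [hexpand, hμAdef, hμBdef, ← sumA, ← sumB]
    exact Stmt12.mainInd hp1 hq1 hσ0 hσ1 hpq d (chi A) (chi B) hchiA hchiB
  -- arithmetic
  have hγ2 : γ ≤ μA ^ (1/p - 1) * μB ^ (1/q) := by
    have step : (1 / μA) * hExp d (fun x => Tnoise σ (chi A) x * chi B x)
        ≤ (1 / μA) * (μA ^ (1/p) * μB ^ (1/q)) :=
      mul_le_mul_of_nonneg_left hI (by positivity)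
    have eqr : (1 / μA) * (μA ^ (1/p) * μB ^ (1/q)) = μA ^ (1/p - 1) * μB ^ (1/q) := by
      rw [Real.rpow_sub hμA, Real.rpow_one]
      field_simp
    rw [eqr] at step
    exact le_trans hcorr step
  set e : ℝ := (1/p - 1) * q with hedef
  have hγq : γ ^ q ≤ μA ^ e * μB := by
    have h1 := Real.rpow_le_rpow hγ0 hγ2 hqpos.le
    have h2 : (μA ^ (1/p - 1) * μB ^ (1/q)) ^ q = μA ^ e * μB := by
      rw [Real.mul_rpow (Real.rpow_nonneg hμA.le _) (Real.rpow_nonneg hμB.le _),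
        ← Real.rpow_mul hμA.le, ← Real.rpow_mul hμB.le, one_div_mul_cancel hqpos.ne',
        Real.rpow_one, hedef]
    rw [h2] at h1
    exact h1
  have hexps : 1 + q/p - q = e + 1 := by rw [hedef]; field_simp; ring
  have hsum : p + q - q * p = 1 - σ ^ 2 := by linear_combination -hpq
  have h1e : 0 ≤ e + 1 := by
    rw [hedef]
    have h2 : 0 < p + q - q * p := by nlinarith
    have : (1/p - 1) * q + 1 = (p + q - q * p) / p := by field_simp; ring
    rw [this]
    positivity
  have hminv : m ≤ μA⁻¹ := by
    have h3 : μA * m ≤ 1 := (le_div_iff₀ (by linarith : (0:ℝ) < m)).1 hAsmall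
    have h4 : m ≤ 1 / μA := (le_div_iff₀ hμA).2 (by linarith [mul_comm μA m])
    rwa [one_div] at h4
  have hrm : m ^ (e+1) ≤ (μA ^ (e+1))⁻¹ := by
    have := Real.rpow_le_rpow (by linarith : (0:ℝ) ≤ m) hminv h1e
    rwa [Real.inv_rpow hμA.le] at this
  calc γ ^ q * m ^ (1 + q/p - q) = γ ^ q * m ^ (e+1) := by rw [hexps]
    _ ≤ (μA ^ e * μB) * (μA ^ (e+1))⁻¹ :=
        mul_le_mul hγq hrm (Real.rpow_nonneg (by linarith) _)
          (mul_nonneg (Real.rpow_nonneg hμA.le _) hμB.le)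
    _ = μB / μA := by
        rw [← Real.rpow_neg hμA.le,
          show μA ^ e * μB * μA ^ (-(e+1)) = μB * (μA ^ e * μA ^ (-(e+1))) from by ring,
          ← Real.rpow_add hμA, show e + -(e+1) = -1 by ring, Real.rpow_neg_one,
          div_eq_mul_inv]
end

section
/- Fix c > 1, let σ = 1 - 1/c, and set p = 1 + (log log n)/(log n), q = 1 + σ²(log n)/(log log n) (so (p-1)(q-1) = σ²). If m, w, n satisfy m·w ≥ n · γ^q · m^{1 + q/p - q} for a fixed constant γ ∈ (0,1), and w = n^{o(1)}, then m ≥ n^{1/σ² - o(1)}. In particular, with σ = 1 - 1/c this gives m ≥ n^{(c/(c-1))² - o(1)}. -/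
set_option maxHeartbeats 2000000

open Filter

theorem stmt13 (c γ σ : ℝ) (hc : 1 < c) (hσ : σ = 1 - 1 / c)
    (hγ0 : 0 < γ) (hγ1 : γ < 1)
    (m w : ℕ → ℝ) (hm1 : ∀ n, 1 ≤ m n) (hw1 : ∀ n, 1 ≤ w n)
    (hw : ∀ ε > (0 : ℝ), ∀ᶠ n : ℕ in atTop, w n ≤ (n : ℝ) ^ ε)
    (hlb : ∀ᶠ n : ℕ in atTop,
      (n : ℝ) * γ ^ (1 + σ ^ 2 * Real.log n / Real.log (Real.log n)) *
          m n ^ (1 + (1 + σ ^ 2 * Real.log n / Real.log (Real.log n)) /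
              (1 + Real.log (Real.log n) / Real.log n)
            - (1 + σ ^ 2 * Real.log n / Real.log (Real.log n)))
        ≤ m n * w n) :
    ∀ ε > (0 : ℝ), ∀ᶠ n : ℕ in atTop, (n : ℝ) ^ (1 / σ ^ 2 - ε) ≤ m n := by
  have hc0 : 0 < c := lt_trans one_pos hc
  have hσ0 : 0 < σ := by
    have : 1 / c < 1 := (div_lt_one hc0).2 hc
    rw [hσ]; linarith
  have hσ2 : (0:ℝ) < σ ^ 2 := by positivity
  intro ε hε
  by_cases hcase : 1 / σ ^ 2 - ε ≤ 0
  · filter_upwards [eventually_ge_atTop 1] with n hn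
    have h1n : (1:ℝ) ≤ (n:ℝ) := by exact_mod_cast hn
    have := Real.rpow_le_one_of_one_le_of_nonpos h1n hcase
    linarith [hm1 n]
  push_neg at hcase
  set δ : ℝ := ε * σ ^ 4 / (2 * σ ^ 2 + 1) with hδdef
  have hδ : 0 < δ := by positivity
  have hδeq : δ * (2 * σ ^ 2 + 1) = ε * σ ^ 4 := by
    rw [hδdef]; field_simp
  clear_value δ
  have hlogγ : Real.log γ < 0 := Real.log_neg hγ0 hγ1
  set A : ℝ := -Real.log γ with hAdef
  have hA0 : 0 < A := by simp [hAdef]; linarith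
  have hγA : Real.log γ = -A := by simp [hAdef]
  clear_value A
  have hLt : Tendsto (fun n : ℕ => Real.log n) atTop atTop :=
    Real.tendsto_log_atTop.comp tendsto_natCast_atTop_atTop
  have hLLt : Tendsto (fun n : ℕ => Real.log (Real.log n)) atTop atTop :=
    Real.tendsto_log_atTop.comp hLt
  have hratio : Tendsto (fun n : ℕ => Real.log (Real.log n) / Real.log n) atTop (nhds 0) :=
    (Real.isLittleO_log_id_atTop.tendsto_div_nhds_zero).comp hLt
  clear hδdef hAdef
  filter_upwards [hlb, hw δ hδ,
    hLt.eventually_ge_atTop (max 1 (2 * A / δ)),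
    hLLt.eventually_ge_atTop (max 1 (2 * σ ^ 2 * A / δ)),
    hratio.eventually_lt_const hδ,
    eventually_ge_atTop 1] with n h1 h2 h3 h4 h5 hn1
  clear hLt hLLt hratio
  set L : ℝ := Real.log n with hLdef
  set LL : ℝ := Real.log L with hLLdef
  have hL1 : 1 ≤ L := le_trans (le_max_left _ _) h3
  have hLL1 : 1 ≤ LL := le_trans (le_max_left _ _) h4
  have hL0 : 0 < L := by linarith
  have hLL0 : 0 < LL := by linarith
  have hLA : 2 * A ≤ δ * L := by
    have := le_trans (le_max_right 1 (2 * A / δ)) h3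
    rw [div_le_iff₀ hδ] at this; linarith
  have hLLA : 2 * σ ^ 2 * A ≤ δ * LL := by
    have := le_trans (le_max_right 1 (2 * σ ^ 2 * A / δ)) h4
    rw [div_le_iff₀ hδ] at this; linarith
  have hn0 : (0:ℝ) < (n:ℝ) := by exact_mod_cast Nat.lt_of_lt_of_le Nat.zero_lt_one hn1
  have hm0 : (0:ℝ) < m n := lt_of_lt_of_le one_pos (hm1 n)
  have hw0 : (0:ℝ) < w n := lt_of_lt_of_le one_pos (hw1 n)
  set Q : ℝ := 1 + σ ^ 2 * L / LL with hQdef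
  set P : ℝ := 1 + LL / L with hPdef
  set E : ℝ := 1 + Q / P - Q with hEdef
  clear_value L LL Q P E
  have hQ1 : 1 ≤ Q := by
    have : 0 ≤ σ ^ 2 * L / LL := div_nonneg (mul_nonneg hσ2.le hL0.le) hLL0.le
    rw [hQdef]; linarith
  have hP1 : 1 < P := by
    have : 0 < LL / L := div_pos hLL0 hL0
    rw [hPdef]; linarith
  -- take logs of h1
  have hlhs : 0 < (n : ℝ) * γ ^ Q * m n ^ E := by positivity
  have hlog : L + Q * Real.log γ + E * Real.log (m n) ≤ Real.log (m n) + Real.log (w n) := by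
    have h := Real.log_le_log hlhs h1
    rw [Real.log_mul (by positivity) (by positivity),
      Real.log_mul (by positivity) (by positivity),
      Real.log_mul (by positivity) (by positivity),
      Real.log_rpow hγ0, Real.log_rpow hm0, ← hLdef] at h
    exact h
  -- bound log w
  have hwb : Real.log (w n) ≤ δ * L := by
    have h := Real.log_le_log hw0 h2
    rwa [Real.log_rpow hn0, ← hLdef] at h
  -- bound Q * log γ
  have hqγ : -(δ * L) ≤ Q * Real.log γ := by
    have h1' : A ≤ δ * L / 2 := by linarith
    have h2' : σ ^ 2 * L / LL * A ≤ δ * L / 2 := by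
      rw [div_mul_eq_mul_div, div_le_iff₀ hLL0]
      nlinarith [mul_le_mul_of_nonneg_right hLLA (le_of_lt hL0)]
    have hQA : Q * A = A + σ ^ 2 * L / LL * A := by rw [hQdef]; ring
    have hQA' : Q * A ≤ δ * L := by rw [hQA]; linarith
    rw [hγA]; nlinarith
  -- bound 1 - E
  have hLdiv : LL / L < δ := h5
  have hE : 1 - E ≤ σ ^ 2 + δ := by
    have hp0 : 0 < P := by linarith
    have h1me : 1 - E = Q * (P - 1) / P := by
      rw [hEdef]; field_simp; ring
    have hQP : Q * (P - 1) = LL / L + σ ^ 2 := by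
      rw [hQdef, hPdef]; field_simp; ring
    have hdiv : Q * (P - 1) / P ≤ Q * (P - 1) := by
      have hnum : 0 ≤ Q * (P - 1) := mul_nonneg (by linarith) (by linarith)
      rw [div_le_iff₀ hp0]
      exact le_mul_of_one_le_right hnum hP1.le
    rw [h1me]; rw [hQP] at hdiv ⊢; linarith
  have hm0' : 0 ≤ Real.log (m n) := Real.log_nonneg (hm1 n)
  -- combine
  have hkey : (1 - 2 * δ) * L ≤ (σ ^ 2 + δ) * Real.log (m n) := by
    have h6 : (1 - E) * Real.log (m n) ≤ (σ ^ 2 + δ) * Real.log (m n) :=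
      mul_le_mul_of_nonneg_right hE hm0'
    nlinarith [h6, hlog, hqγ, hwb]
  clear h1 hlhs hlog h2 hlb hw hwb hqγ hE h3 h4 h5 hLdiv
  have hcoef : (1 / σ ^ 2 - ε) * (σ ^ 2 + δ) ≤ 1 - 2 * δ := by
    rw [div_sub' (ne_of_gt hσ2)]
    rw [div_mul_eq_mul_div, div_le_iff₀ hσ2]
    nlinarith [mul_nonneg (mul_nonneg hσ2.le hε.le) hδ.le]
  have hfin : (1 / σ ^ 2 - ε) * L ≤ Real.log (m n) := by
    have hpos : (0:ℝ) < σ ^ 2 + δ := by positivity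
    rw [← mul_le_mul_iff_right₀ hpos]
    nlinarith [mul_le_mul_of_nonneg_right hcoef (le_of_lt hL0)]
  calc (n : ℝ) ^ (1 / σ ^ 2 - ε) = Real.exp ((1 / σ ^ 2 - ε) * L) := by
        rw [Real.rpow_def_of_pos hn0, ← hLdef, mul_comm]
      _ ≤ Real.exp (Real.log (m n)) := Real.exp_le_exp.2 hfin
      _ = m n := Real.exp_log hm0
end

section
/- (Adaptive-to-nonadaptive reduction for two probes.) Suppose a deterministic data structure with cells of w bits answers queries by two adaptive cell probes and succeeds with probability at least 1/2 + η. Then there is a data structure making its two cell probes non-adaptively that succeeds with probability at least 1/2 + η/2^w: guess the content of the first probed cell uniformly among 2^w values, simulate the adaptive algorithm with that guess to determine both probe locations, probe both non-adaptively, output the adaptive algorithm's answer if the guess was correct and a uniformly random bit otherwise. -/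
/-- Adaptive-to-nonadaptive reduction for two cell probes.  The adaptive scheme
(first probe `π₁ q`, second probe `π₂ q` depending on the first cell's content,
output `out`) succeeds with probability at least `1/2 + η` over the query
distribution `μ`.  The nonadaptive scheme guesses the content `g` of the first
probed cell uniformly among the `2^w` values, probes cells `π₁ q` and `π₂ q g`
non-adaptively, outputs the adaptive answer if the guess was correct, and a
uniformly random bit (success probability `1/2`) otherwise; it succeeds with
probability at least `1/2 + η/2^w`. -/
theorem stmt17 {Q : Type*} [Fintype Q] (m w : ℕ)
    (μ : Q → ℝ) (hμ0 : ∀ q, 0 ≤ μ q) (hμ1 : ∑ q, μ q = 1)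
    (D : Fin m → Fin (2 ^ w))
    (π₁ : Q → Fin m) (π₂ : Q → Fin (2 ^ w) → Fin m)
    (out : Q → Fin (2 ^ w) → Fin (2 ^ w) → Bool)
    (f : Q → Bool) (η : ℝ)
    (hsucc : (1 : ℝ) / 2 + η ≤ ∑ q, μ q *
      (if out q (D (π₁ q)) (D (π₂ q (D (π₁ q)))) = f q then 1 else 0)) :
    (1 : ℝ) / 2 + η / 2 ^ w ≤ (1 / 2 ^ w) * ∑ g : Fin (2 ^ w), ∑ q, μ q *
      (if D (π₁ q) = g then (if out q g (D (π₂ q g)) = f q then (1 : ℝ) else 0)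
        else 1 / 2) := by
  have hc : (0:ℝ) < 2 ^ w := by positivity
  have hswap : ∑ g : Fin (2 ^ w), ∑ q, μ q *
      (if D (π₁ q) = g then (if out q g (D (π₂ q g)) = f q then (1 : ℝ) else 0)
        else 1 / 2)
      = ∑ q, μ q * ((if out q (D (π₁ q)) (D (π₂ q (D (π₁ q)))) = f q
          then (1:ℝ) else 0) + ((2:ℝ) ^ w - 1) / 2) := by
    rw [Finset.sum_comm]
    refine Finset.sum_congr rfl fun q _ => ?_
    rw [← Finset.mul_sum]
    congr 1
    have : ∀ g : Fin (2 ^ w),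
        (if D (π₁ q) = g then (if out q g (D (π₂ q g)) = f q then (1 : ℝ) else 0)
          else 1 / 2)
        = (if D (π₁ q) = g then (if out q g (D (π₂ q g)) = f q then (1 : ℝ) else 0) - 1/2
            else 0) + 1/2 := by
      intro g; split <;> ring
    rw [Finset.sum_congr rfl fun g _ => this g, Finset.sum_add_distrib,
      Finset.sum_ite_eq, Finset.sum_const]
    simp only [Finset.mem_univ, if_true, Finset.card_univ, Fintype.card_fin,
      nsmul_eq_mul]
    push_cast
    ring
  rw [hswap]
  have hexp : ∑ q, μ q * ((if out q (D (π₁ q)) (D (π₂ q (D (π₁ q)))) = f q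
      then (1:ℝ) else 0) + ((2:ℝ) ^ w - 1) / 2)
      = (∑ q, μ q * (if out q (D (π₁ q)) (D (π₂ q (D (π₁ q)))) = f q
        then (1:ℝ) else 0)) + ((2:ℝ) ^ w - 1) / 2 := by
    simp only [mul_add]
    rw [Finset.sum_add_distrib, ← Finset.sum_mul, hμ1, one_mul]
  rw [hexp, one_div_mul_eq_div, le_div_iff₀ hc]
  have hinv2 : η / (2:ℝ) ^ w * (2:ℝ) ^ w = η := by field_simp
  nlinarith [hsucc, hinv2, hc]
end
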